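/- arXiv:2002.08907 — 5 statements merged into one kernel-verified Lean document; each statement's English description precedes it below -/
import Mathlib

section
/- Let X ⊆ ℝⁿ be a nonempty compact convex set, f : ℝⁿ → ℝ differentiable, x_k ∈ X, and H_k ∈ ℝ^{n×n} symmetric positive definite. Then for all constants α > 0 and ν > 0 with αν ≥ 1: min_{x∈X} ( ⟨∇f(x_k), x − x_k⟩ + (α/2)‖x − x_k‖²_{H_k} ) ≤ (1/(αν)) · min_{x∈X} ( ⟨∇f(x_k), x − x_k⟩ + (1/(2ν))‖x − x_k‖²_{H_k} ). -/
open Matrix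
open scoped RealInnerProductSpace

/-- The largest (real) eigenvalue of a matrix, as the supremum of its real spectrum. -/
noncomputable def lamMax {n : ℕ} (M : Matrix (Fin n) (Fin n) ℝ) : ℝ :=
  sSup (spectrum ℝ M)

/-- The smallest (real) eigenvalue of a matrix, as the infimum of its real spectrum. -/
noncomputable def lamMin {n : ℕ} (M : Matrix (Fin n) (Fin n) ℝ) : ℝ :=
  sInf (spectrum ℝ M)

/-- Action of a matrix on a vector of Euclidean space. -/
noncomputable def mApply {n : ℕ} (H : Matrix (Fin n) (Fin n) ℝ)
    (v : EuclideanSpace ℝ (Fin n)) : EuclideanSpace ℝ (Fin n) :=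
  Matrix.toEuclideanCLM (𝕜 := ℝ) H v

/-- The squared matrix "norm" ‖v‖²_H := vᵀ H v. -/
noncomputable def qForm {n : ℕ} (H : Matrix (Fin n) (Fin n) ℝ)
    (v : EuclideanSpace ℝ (Fin n)) : ℝ :=
  ⟪v, mApply H v⟫

/-- Spectral (ℓ² operator) norm of a matrix. -/
noncomputable def mNorm {n : ℕ} (H : Matrix (Fin n) (Fin n) ℝ) : ℝ :=
  ‖Matrix.toEuclideanCLM (𝕜 := ℝ) H‖

/-- for `α, ν > 0` with `αν ≥ 1`,
`min_{x∈X} (⟨∇f(x_k), x − x_k⟩ + (α/2)‖x − x_k‖²_{H_k})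
  ≤ (1/(αν)) min_{x∈X} (⟨∇f(x_k), x − x_k⟩ + (1/(2ν))‖x − x_k‖²_{H_k})`. -/
theorem socgs_quadratic_subproblem_scaling {n : ℕ}
    (X : Set (EuclideanSpace ℝ (Fin n)))
    (hne : X.Nonempty) (hcomp : IsCompact X) (hconv : Convex ℝ X)
    (f : EuclideanSpace ℝ (Fin n) → ℝ) (hf : Differentiable ℝ f)
    (xk : EuclideanSpace ℝ (Fin n)) (hxk : xk ∈ X)
    (Hk : Matrix (Fin n) (Fin n) ℝ) (hHk : Hk.PosDef)
    (α ν : ℝ) (hα : 0 < α) (hν : 0 < ν) (hαν : 1 ≤ α * ν) :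
    sInf ((fun x => ⟪gradient f xk, x - xk⟫ + α / 2 * qForm Hk (x - xk)) '' X) ≤
      (1 / (α * ν)) *
        sInf ((fun x => ⟪gradient f xk, x - xk⟫ + 1 / (2 * ν) * qForm Hk (x - xk)) '' X) := by

  set g := gradient f xk with hg
  have hc0 : (0:ℝ) < α * ν := by positivity
  set c : ℝ := 1 / (α * ν) with hcdef
  have hcpos : 0 < c := by positivity
  have hcle : c ≤ 1 := by
    rw [hcdef, div_le_one hc0]; exact hαν
  -- continuity and boundedness below
  have hcont : ∀ β : ℝ, Continuous
      (fun x : EuclideanSpace ℝ (Fin n) => ⟪g, x - xk⟫ + β * qForm Hk (x - xk)) := by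
    intro β
    unfold qForm mApply
    exact (continuous_const.inner (continuous_id.sub continuous_const)).add
      (continuous_const.mul ((continuous_id.sub continuous_const).inner
        ((Matrix.toEuclideanCLM (𝕜 := ℝ) Hk).continuous.comp
          (continuous_id.sub continuous_const))))
  have hbdd : BddBelow ((fun x => ⟪g, x - xk⟫ + α / 2 * qForm Hk (x - xk)) '' X) :=
    (hcomp.image (hcont (α/2))).bddBelow
  have hne2 : ((fun x => ⟪g, x - xk⟫ + 1 / (2*ν) * qForm Hk (x - xk)) '' X).Nonempty :=
    hne.image _
  -- key pointwise inequality
  have key : ∀ x ∈ X,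
      sInf ((fun x => ⟪g, x - xk⟫ + α / 2 * qForm Hk (x - xk)) '' X)
        ≤ c * (⟪g, x - xk⟫ + 1 / (2*ν) * qForm Hk (x - xk)) := by
    intro x hx
    have hyX : xk + c • (x - xk) ∈ X := by
      have := hconv hxk hx (a := 1 - c) (b := c) (by linarith) hcpos.le (by ring)
      convert this using 1
      module
    have hval : (fun x => ⟪g, x - xk⟫ + α / 2 * qForm Hk (x - xk)) (xk + c • (x - xk))
        = c * (⟪g, x - xk⟫ + 1 / (2*ν) * qForm Hk (x - xk)) := by
      have hsub : (xk + c • (x - xk)) - xk = c • (x - xk) := by abel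
      have hq : qForm Hk (c • (x - xk)) = c * (c * qForm Hk (x - xk)) := by
        unfold qForm mApply
        rw [_root_.map_smul, real_inner_smul_left, real_inner_smul_right]
      simp only [hsub, hq, real_inner_smul_right]
      have hα' : α ≠ 0 := ne_of_gt hα
      have hν' : ν ≠ 0 := ne_of_gt hν
      field_simp [hcdef]
      have hcαν : c * α * ν = 1 := by rw [hcdef]; field_simp
      linear_combination (qForm Hk (x - xk)) * hcαν
    calc sInf _ ≤ (fun x => ⟪g, x - xk⟫ + α / 2 * qForm Hk (x - xk)) (xk + c • (x - xk)) :=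
          csInf_le hbdd ⟨_, hyX, rfl⟩
      _ = _ := hval
  have hfinal : sInf ((fun x => ⟪g, x - xk⟫ + α / 2 * qForm Hk (x - xk)) '' X) / c
      ≤ sInf ((fun x => ⟪g, x - xk⟫ + 1 / (2*ν) * qForm Hk (x - xk)) '' X) := by
    apply le_csInf hne2
    rintro b ⟨x, hx, rfl⟩
    rw [div_le_iff₀ hcpos, mul_comm]
    exact key x hx
  calc sInf ((fun x => ⟪g, x - xk⟫ + α / 2 * qForm Hk (x - xk)) '' X)
      = c * (sInf ((fun x => ⟪g, x - xk⟫ + α / 2 * qForm Hk (x - xk)) '' X) / c) := by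
        rw [mul_div_assoc', eq_div_iff hcpos.ne', mul_comm]
    _ ≤ c * sInf ((fun x => ⟪g, x - xk⟫ + 1 / (2*ν) * qForm Hk (x - xk)) '' X) := by
        exact mul_le_mul_of_nonneg_left hfinal hcpos.le
end

section
/- Let X ⊆ ℝⁿ be a nonempty compact convex set and f : ℝⁿ → ℝ twice continuously differentiable with μ·I ⪯ ∇²f(x) ⪯ L·I for all x ∈ X (0 < μ ≤ L), with unique minimizer x* over X. Fix x_k ∈ X, a symmetric positive definite H_k, and set η_k := max{λ_max(H_k⁻¹∇²f(x_k)), λ_max((∇²f(x_k))⁻¹H_k)}. Let x̃*_{k+1} := argmin_{x∈X} ( f(x_k) + ⟨∇f(x_k), x − x_k⟩ + ½‖x − x_k‖²_{H_k} ) and let x_{k+1} := x_k + γ_k (x̃*_{k+1} − x_k) for any step size 0 < γ_k ≤ μ/(L·η_k). Then f(x_{k+1}) − f(x*) ≤ (1 − μγ_k²/(L·η_k)) · (f(x_k) − f(x*)). -/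
open Matrix
open scoped RealInnerProductSpace

open scoped Pointwise

lemma qForm_eq_dot {n : ℕ} (H : Matrix (Fin n) (Fin n) ℝ) (v : EuclideanSpace ℝ (Fin n)) :
    qForm H v = star ((WithLp.equiv 2 (Fin n → ℝ)) v) ⬝ᵥ (H *ᵥ (WithLp.equiv 2 (Fin n → ℝ)) v) := by
  have h := Matrix.ofLp_toEuclideanCLM (𝕜 := ℝ) H v
  simp only [qForm, mApply, PiLp.inner_apply, RCLike.inner_apply, conj_trivial, dotProduct,
    Pi.star_apply, star_trivial]
  refine Finset.sum_congr rfl fun i _ => ?_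
  have : (Matrix.toEuclideanCLM (𝕜 := ℝ) H v) i = (H *ᵥ (WithLp.equiv 2 (Fin n → ℝ)) v) i := by
    exact congrFun h i
  rw [this]
  exact mul_comm _ _

lemma psd_smul' {n : ℕ} {M : Matrix (Fin n) (Fin n) ℝ} (hM : M.PosSemidef) {c : ℝ} (hc : 0 ≤ c) :
    (c • M).PosSemidef := by
  refine Matrix.PosSemidef.of_dotProduct_mulVec_nonneg ?_ fun x => ?_
  · rw [IsHermitian, conjTranspose_smul, star_trivial, hM.1.eq]
  · rw [smul_mulVec, dotProduct_smul, smul_eq_mul]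
    exact mul_nonneg hc (hM.dotProduct_mulVec_nonneg x)

lemma qForm_nonneg {n : ℕ} {M : Matrix (Fin n) (Fin n) ℝ} (hM : M.PosSemidef)
    (v : EuclideanSpace ℝ (Fin n)) : 0 ≤ qForm M v := by
  rw [qForm_eq_dot]; exact hM.dotProduct_mulVec_nonneg _

lemma qForm_mono {n : ℕ} {A B : Matrix (Fin n) (Fin n) ℝ} (h : (B - A).PosSemidef)
    (v : EuclideanSpace ℝ (Fin n)) : qForm A v ≤ qForm B v := by
  have h0 := h.dotProduct_mulVec_nonneg ((WithLp.equiv 2 (Fin n → ℝ)) v)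
  rw [sub_mulVec, dotProduct_sub] at h0
  have hA := qForm_eq_dot A v
  have hB := qForm_eq_dot B v
  linarith

lemma qForm_smul_mat {n : ℕ} (c : ℝ) (M : Matrix (Fin n) (Fin n) ℝ)
    (v : EuclideanSpace ℝ (Fin n)) : qForm (c • M) v = c * qForm M v := by
  rw [qForm_eq_dot, qForm_eq_dot, smul_mulVec, dotProduct_smul, smul_eq_mul]

lemma qForm_smul_vec {n : ℕ} (c : ℝ) (M : Matrix (Fin n) (Fin n) ℝ)
    (v : EuclideanSpace ℝ (Fin n)) : qForm M (c • v) = c ^ 2 * qForm M v := by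
  have : mApply M (c • v) = c • mApply M v := by
    simp [mApply, _root_.map_smul]
  rw [qForm, this, real_inner_smul_left, real_inner_smul_right, qForm]
  ring

lemma qForm_one {n : ℕ} (v : EuclideanSpace ℝ (Fin n)) : qForm 1 v = ⟪v, v⟫ := by
  have : mApply (1 : Matrix (Fin n) (Fin n) ℝ) v = v := by
    simp [mApply, _root_.map_one]
  rw [qForm, this]

lemma posSemidef_lamMax_smul_sub {n : ℕ} {P Q : Matrix (Fin n) (Fin n) ℝ}
    (hP : P.PosDef) (hQ : Q.IsHermitian) :
    ((lamMax (P⁻¹ * Q)) • P - Q).PosSemidef := by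
  classical
  set s := lamMax (P⁻¹ * Q) with hs
  have hPsd := hP.posSemidef
  obtain ⟨R, hR, hRR⟩ : ∃ R : Matrix (Fin n) (Fin n) ℝ, R.PosSemidef ∧ R * R = P :=
    open scoped MatrixOrder in
    ⟨CFC.sqrt P, (CFC.sqrt_nonneg P).posSemidef, CFC.sqrt_mul_sqrt_self P hPsd.nonneg⟩
  have hdet : IsUnit R.det := by
    have hdd : R.det * R.det = P.det := by rw [← det_mul, hRR]
    have hPpos := hP.det_pos
    refine isUnit_iff_ne_zero.mpr fun h => ?_
    rw [h, mul_zero] at hdd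
    exact absurd hdd.symm (ne_of_gt hPpos)
  have hRiR : R⁻¹ * R = 1 := nonsing_inv_mul R hdet
  have hRRi : R * R⁻¹ = 1 := mul_nonsing_inv R hdet
  have hRH : Rᴴ = R := hR.1.eq
  have hRiH : (R⁻¹)ᴴ = R⁻¹ := hR.1.inv.eq
  set S := R⁻¹ * Q * R⁻¹ with hSdef
  have hSH : S.IsHermitian := by
    rw [IsHermitian, hSdef, conjTranspose_mul, conjTranspose_mul, hRiH, hQ.eq, mul_assoc]
  -- conjugation: P⁻¹ * Q = R⁻¹ * S * R
  have hconj : P⁻¹ * Q = R⁻¹ * S * R := by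
    rw [hSdef, ← hRR, Matrix.mul_inv_rev]
    rw [mul_assoc R⁻¹ (R⁻¹ * Q * R⁻¹) R, mul_assoc (R⁻¹ * Q) R⁻¹ R, hRiR, mul_one, ← mul_assoc]
  -- spectra agree
  have hspec : spectrum ℝ (P⁻¹ * Q) = spectrum ℝ S := by
    haveI : Invertible R := R.invertibleOfIsUnitDet hdet
    set u : (Matrix (Fin n) (Fin n) ℝ)ˣ := unitOfInvertible R with hudef
    have hu1 : (u : Matrix (Fin n) (Fin n) ℝ) = R := rfl
    have hu2 : ((u⁻¹ : (Matrix (Fin n) (Fin n) ℝ)ˣ) : Matrix (Fin n) (Fin n) ℝ) = R⁻¹ := by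
      rw [Matrix.coe_units_inv, hu1]
    have hu3 := spectrum.units_conjugate' (R := ℝ) (a := S) (u := u)
    rw [hu1, hu2] at hu3
    rw [hconj, hu3]
  have hbdd : BddAbove (spectrum ℝ (P⁻¹ * Q)) := by
    rw [hspec, hSH.spectrum_real_eq_range_eigenvalues]
    exact (Set.finite_range _).bddAbove
  -- the matrix s • 1 - S is psd
  have hM : ((s • (1 : Matrix (Fin n) (Fin n) ℝ)) - S).IsHermitian := by
    have h1 : ((s • (1 : Matrix (Fin n) (Fin n) ℝ))).IsHermitian := by
      rw [IsHermitian, conjTranspose_smul, star_trivial, conjTranspose_one]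
    exact h1.sub hSH
  have hMpsd : ((s • (1 : Matrix (Fin n) (Fin n) ℝ)) - S).PosSemidef := by
    refine hM.posSemidef_iff_eigenvalues_nonneg.mpr (Pi.le_def.mpr fun i => ?_)
    have hmem : hM.eigenvalues i ∈ spectrum ℝ ((s • (1 : Matrix (Fin n) (Fin n) ℝ)) - S) :=
      hM.eigenvalues_mem_spectrum_real i
    have hset : spectrum ℝ ((s • (1 : Matrix (Fin n) (Fin n) ℝ)) - S)
        = ({s} : Set ℝ) - spectrum ℝ S := by
      rw [show (s • (1 : Matrix (Fin n) (Fin n) ℝ)) - S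
          = (algebraMap ℝ (Matrix (Fin n) (Fin n) ℝ)) s - S by
        rw [Algebra.algebraMap_eq_smul_one], ← spectrum.singleton_sub_eq]
    rw [hset] at hmem
    rcases Set.mem_sub.mp hmem with ⟨a, ha, b, hb, hab⟩
    have has : a = s := Set.mem_singleton_iff.mp ha
    have hbs : b ≤ s := by
      refine le_csSup hbdd ?_
      rw [hspec]; exact hb
    rw [← hab, has, Pi.zero_apply]
    linarith
  -- transport back by congruence with R
  have hkey : R * ((s • (1 : Matrix (Fin n) (Fin n) ℝ)) - S) * Rᴴ = s • P - Q := by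
    rw [hRH, mul_sub, sub_mul]
    congr 1
    · rw [Matrix.mul_smul, Matrix.smul_mul, mul_one, hRR]
    · simp only [hSdef, ← mul_assoc]
      rw [hRRi, one_mul, mul_assoc, hRiR, mul_one]
  rw [← hkey]
  exact hMpsd.mul_mul_conjTranspose_same R

lemma line_hasDerivAt {n : ℕ} (x d : EuclideanSpace ℝ (Fin n)) (t : ℝ) :
    HasDerivAt (fun t : ℝ => x + t • d) d t := by
  simpa using ((hasDerivAt_id t).smul_const d).const_add x

lemma taylor_upper {n : ℕ} (f : EuclideanSpace ℝ (Fin n) → ℝ) (hdf : Differentiable ℝ f)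
    (Hess : EuclideanSpace ℝ (Fin n) → Matrix (Fin n) (Fin n) ℝ)
    (hHess : ∀ x, HasFDerivAt (gradient f) (Matrix.toEuclideanCLM (𝕜 := ℝ) (Hess x)) x)
    (x d : EuclideanSpace ℝ (Fin n)) (c : ℝ)
    (hc : ∀ t ∈ Set.Icc (0:ℝ) 1, qForm (Hess (x + t • d)) d ≤ c) :
    f (x + d) ≤ f x + ⟪gradient f x, d⟫ + c / 2 := by
  set A : ℝ := ⟪gradient f x, d⟫ with hA
  set G : ℝ → ℝ := fun t => ⟪gradient f (x + t • d), d⟫ with hG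
  have hφ : ∀ t : ℝ, HasDerivAt (fun t : ℝ => f (x + t • d)) (G t) t := by
    intro t
    have h1 := (hdf (x + t • d)).hasGradientAt.hasFDerivAt
    have h2 := h1.comp_hasDerivAt t (line_hasDerivAt x d t)
    exact h2
  have hGd : ∀ t : ℝ, HasDerivAt G (qForm (Hess (x + t • d)) d) t := by
    intro t
    have h2 := (hHess (x + t • d)).comp_hasDerivAt t (line_hasDerivAt x d t)
    have h3 := h2.inner ℝ (hasDerivAt_const t d)
    have : qForm (Hess (x + t • d)) d
        = ⟪gradient f (x + t • d), (0 : EuclideanSpace ℝ (Fin n))⟫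
          + ⟪Matrix.toEuclideanCLM (𝕜 := ℝ) (Hess (x + t • d)) d, d⟫ := by
      simp [qForm, mApply, real_inner_comm, mul_comm]
    rw [hG, this]
    exact h3
  have hG0 : G 0 = A := by simp [hG, hA]
  -- ψ' t = G t - A - c * t
  set ψ' : ℝ → ℝ := fun t => G t - A - c * t with hψ'
  have hψ'd : ∀ t : ℝ, HasDerivAt ψ' (qForm (Hess (x + t • d)) d - c) t := by
    intro t
    have := ((hGd t).sub_const A).sub ((hasDerivAt_id t).const_mul c)
    exact this.congr_deriv (by ring)
  have hψ'anti : AntitoneOn ψ' (Set.Icc 0 1) := by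
    apply antitoneOn_of_deriv_nonpos (convex_Icc 0 1)
    · exact fun t _ => (hψ'd t).differentiableAt.continuousAt.continuousWithinAt
    · exact fun t _ => (hψ'd t).differentiableAt.differentiableWithinAt
    · intro t ht
      rw [(hψ'd t).deriv]
      rw [interior_Icc] at ht
      exact sub_nonpos.mpr (hc t ⟨le_of_lt ht.1, le_of_lt ht.2⟩)
  have hψ'0 : ψ' 0 = 0 := by simp [hψ', hG0]
  have hψ'le : ∀ t ∈ Set.Icc (0:ℝ) 1, ψ' t ≤ 0 := by
    intro t ht
    have := hψ'anti (Set.left_mem_Icc.mpr zero_le_one) ht ht.1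
    rwa [hψ'0] at this
  set ψ : ℝ → ℝ := fun t => f (x + t • d) - t * A - c / 2 * t ^ 2 with hψdef
  have hψd : ∀ t : ℝ, HasDerivAt ψ (ψ' t) t := by
    intro t
    have h1 := ((hφ t).sub ((hasDerivAt_id t).mul_const A)).sub
      (((hasDerivAt_pow 2 t)).const_mul (c / 2))
    have : G t - (1 * A + t * 0) - c / 2 * (2 * t ^ 1) = ψ' t := by
      simp [hψ']; ring
    rw [← this]
    exact h1.congr_deriv (by simp <;> ring)
  have hψanti : AntitoneOn ψ (Set.Icc 0 1) := by
    apply antitoneOn_of_deriv_nonpos (convex_Icc 0 1)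
    · exact fun t _ => (hψd t).differentiableAt.continuousAt.continuousWithinAt
    · exact fun t _ => (hψd t).differentiableAt.differentiableWithinAt
    · intro t ht
      rw [(hψd t).deriv]
      rw [interior_Icc] at ht
      exact hψ'le t ⟨le_of_lt ht.1, le_of_lt ht.2⟩
  have h10 := hψanti (Set.left_mem_Icc.mpr zero_le_one)
      (Set.right_mem_Icc.mpr zero_le_one) zero_le_one
  have hψ0 : ψ 0 = f x := by simp [hψdef]
  have hψ1 : ψ 1 = f (x + d) - A - c / 2 := by simp [hψdef]
  rw [hψ0, hψ1] at h10
  linarith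

lemma taylor_lower {n : ℕ} (f : EuclideanSpace ℝ (Fin n) → ℝ) (hdf : Differentiable ℝ f)
    (Hess : EuclideanSpace ℝ (Fin n) → Matrix (Fin n) (Fin n) ℝ)
    (hHess : ∀ x, HasFDerivAt (gradient f) (Matrix.toEuclideanCLM (𝕜 := ℝ) (Hess x)) x)
    (x d : EuclideanSpace ℝ (Fin n)) (c : ℝ)
    (hc : ∀ t ∈ Set.Icc (0:ℝ) 1, c ≤ qForm (Hess (x + t • d)) d) :
    f x + ⟪gradient f x, d⟫ + c / 2 ≤ f (x + d) := by
  set A : ℝ := ⟪gradient f x, d⟫ with hA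
  set G : ℝ → ℝ := fun t => ⟪gradient f (x + t • d), d⟫ with hG
  have hφ : ∀ t : ℝ, HasDerivAt (fun t : ℝ => f (x + t • d)) (G t) t := by
    intro t
    have h1 := (hdf (x + t • d)).hasGradientAt.hasFDerivAt
    have h2 := h1.comp_hasDerivAt t (line_hasDerivAt x d t)
    exact h2
  have hGd : ∀ t : ℝ, HasDerivAt G (qForm (Hess (x + t • d)) d) t := by
    intro t
    have h2 := (hHess (x + t • d)).comp_hasDerivAt t (line_hasDerivAt x d t)
    have h3 := h2.inner ℝ (hasDerivAt_const t d)
    have : qForm (Hess (x + t • d)) d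
        = ⟪gradient f (x + t • d), (0 : EuclideanSpace ℝ (Fin n))⟫
          + ⟪Matrix.toEuclideanCLM (𝕜 := ℝ) (Hess (x + t • d)) d, d⟫ := by
      simp [qForm, mApply, real_inner_comm, mul_comm]
    rw [hG, this]
    exact h3
  have hG0 : G 0 = A := by simp [hG, hA]
  set ψ' : ℝ → ℝ := fun t => G t - A - c * t with hψ'
  have hψ'd : ∀ t : ℝ, HasDerivAt ψ' (qForm (Hess (x + t • d)) d - c) t := by
    intro t
    have := ((hGd t).sub_const A).sub ((hasDerivAt_id t).const_mul c)
    exact this.congr_deriv (by ring)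
  have hψ'mono : MonotoneOn ψ' (Set.Icc 0 1) := by
    apply monotoneOn_of_deriv_nonneg (convex_Icc 0 1)
    · exact fun t _ => (hψ'd t).differentiableAt.continuousAt.continuousWithinAt
    · exact fun t _ => (hψ'd t).differentiableAt.differentiableWithinAt
    · intro t ht
      rw [(hψ'd t).deriv]
      rw [interior_Icc] at ht
      exact sub_nonneg.mpr (hc t ⟨le_of_lt ht.1, le_of_lt ht.2⟩)
  have hψ'0 : ψ' 0 = 0 := by simp [hψ', hG0]
  have hψ'le : ∀ t ∈ Set.Icc (0:ℝ) 1, 0 ≤ ψ' t := by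
    intro t ht
    have := hψ'mono (Set.left_mem_Icc.mpr zero_le_one) ht ht.1
    rwa [hψ'0] at this
  set ψ : ℝ → ℝ := fun t => f (x + t • d) - t * A - c / 2 * t ^ 2 with hψdef
  have hψd : ∀ t : ℝ, HasDerivAt ψ (ψ' t) t := by
    intro t
    have h1 := ((hφ t).sub ((hasDerivAt_id t).mul_const A)).sub
      (((hasDerivAt_pow 2 t)).const_mul (c / 2))
    have : G t - (1 * A + t * 0) - c / 2 * (2 * t ^ 1) = ψ' t := by
      simp [hψ']; ring
    rw [← this]
    exact h1.congr_deriv (by simp <;> ring)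
  have hψmono : MonotoneOn ψ (Set.Icc 0 1) := by
    apply monotoneOn_of_deriv_nonneg (convex_Icc 0 1)
    · exact fun t _ => (hψd t).differentiableAt.continuousAt.continuousWithinAt
    · exact fun t _ => (hψd t).differentiableAt.differentiableWithinAt
    · intro t ht
      rw [(hψd t).deriv]
      rw [interior_Icc] at ht
      exact hψ'le t ⟨le_of_lt ht.1, le_of_lt ht.2⟩
  have h10 := hψmono (Set.left_mem_Icc.mpr zero_le_one)
      (Set.right_mem_Icc.mpr zero_le_one) zero_le_one
  have hψ0 : ψ 0 = f x := by simp [hψdef]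
  have hψ1 : ψ 1 = f (x + d) - A - c / 2 := by simp [hψdef]
  rw [hψ0, hψ1] at h10
  linarith

set_option maxHeartbeats 1000000 in
/-- global convergence of the PVM step with bounded step size:
with `μ·I ⪯ ∇²f ⪯ L·I` on `X`, `η_k := max{λ_max(H_k⁻¹∇²f(x_k)), λ_max((∇²f(x_k))⁻¹H_k)}`,
`x̃*_{k+1}` the minimizer of the quadratic model over `X`, and
`x_{k+1} = x_k + γ_k(x̃*_{k+1} − x_k)` with `0 < γ_k ≤ μ/(Lη_k)`, one has
`f(x_{k+1}) − f(x*) ≤ (1 − μγ_k²/(Lη_k))(f(x_k) − f(x*))`. -/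
theorem socgs_pvm_global_bounded_step {n : ℕ}
    (X : Set (EuclideanSpace ℝ (Fin n)))
    (hne : X.Nonempty) (hcomp : IsCompact X) (hconv : Convex ℝ X)
    (f : EuclideanSpace ℝ (Fin n) → ℝ) (hf : ContDiff ℝ 2 f)
    (Hess : EuclideanSpace ℝ (Fin n) → Matrix (Fin n) (Fin n) ℝ)
    (hHess : ∀ x, HasFDerivAt (gradient f) (Matrix.toEuclideanCLM (𝕜 := ℝ) (Hess x)) x)
    (μ L : ℝ) (hμ : 0 < μ) (hμL : μ ≤ L)
    (hbound : ∀ x ∈ X, (Hess x - μ • (1 : Matrix (Fin n) (Fin n) ℝ)).PosSemidef ∧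
      (L • (1 : Matrix (Fin n) (Fin n) ℝ) - Hess x).PosSemidef)
    (xstar : EuclideanSpace ℝ (Fin n)) (hxstar : xstar ∈ X)
    (hminstar : ∀ y ∈ X, f xstar ≤ f y)
    (huniq : ∀ z ∈ X, (∀ y ∈ X, f z ≤ f y) → z = xstar)
    (xk : EuclideanSpace ℝ (Fin n)) (hxk : xk ∈ X)
    (Hk : Matrix (Fin n) (Fin n) ℝ) (hHk : Hk.PosDef)
    (ηk : ℝ) (hηk : ηk = max (lamMax (Hk⁻¹ * Hess xk)) (lamMax ((Hess xk)⁻¹ * Hk)))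
    (fhat : EuclideanSpace ℝ (Fin n) → ℝ)
    (hfhat : ∀ x, fhat x =
      f xk + ⟪gradient f xk, x - xk⟫ + (1 / 2) * qForm Hk (x - xk))
    (xt : EuclideanSpace ℝ (Fin n)) (hxtX : xt ∈ X)
    (hxtmin : ∀ w ∈ X, fhat xt ≤ fhat w)
    (γ : ℝ) (hγ0 : 0 < γ) (hγ : γ ≤ μ / (L * ηk))
    (xk1 : EuclideanSpace ℝ (Fin n)) (hxk1 : xk1 = xk + γ • (xt - xk)) :
    f xk1 - f xstar ≤ (1 - μ * γ ^ 2 / (L * ηk)) * (f xk - f xstar) := by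
  rcases Nat.eq_zero_or_pos n with hn0 | hn
  · subst hn0
    haveI : Subsingleton (EuclideanSpace ℝ (Fin 0)) :=
      ⟨fun a b => PiLp.ext fun i => Fin.elim0 i⟩
    rw [Subsingleton.elim xk1 xstar, Subsingleton.elim xk xstar]
    simp
  have hdf : Differentiable ℝ f := hf.differentiable (by norm_num)
  have hbk := hbound xk hxk
  have hone : (μ • (1 : Matrix (Fin n) (Fin n) ℝ)).PosDef := by
    refine Matrix.PosDef.of_dotProduct_mulVec_pos ?_ fun v hv => ?_
    · rw [Matrix.IsHermitian, Matrix.conjTranspose_smul, star_trivial, Matrix.conjTranspose_one]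
    · rw [Matrix.smul_mulVec, Matrix.one_mulVec, dotProduct_smul, smul_eq_mul]
      exact mul_pos hμ (dotProduct_star_self_pos_iff.mpr hv)
  have hQpd : (Hess xk).PosDef := by
    have h := Matrix.PosDef.posSemidef_add hbk.1 hone
    rwa [sub_add_cancel] at h
  have hQherm : (Hess xk).IsHermitian := hQpd.isHermitian
  -- spectral bounds
  have hs1 := posSemidef_lamMax_smul_sub hHk hQherm
  have hs2 := posSemidef_lamMax_smul_sub hQpd hHk.isHermitian
  have hmax1 : lamMax (Hk⁻¹ * Hess xk) ≤ ηk := hηk ▸ le_max_left _ _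
  have hmax2 : lamMax ((Hess xk)⁻¹ * Hk) ≤ ηk := hηk ▸ le_max_right _ _
  have hQη : (ηk • Hk - Hess xk).PosSemidef := by
    have h := hs1.add (psd_smul' hHk.posSemidef (sub_nonneg.mpr hmax1))
    have hid : (lamMax (Hk⁻¹ * Hess xk) • Hk - Hess xk)
        + (ηk - lamMax (Hk⁻¹ * Hess xk)) • Hk = ηk • Hk - Hess xk := by module
    rwa [hid] at h
  have hHη : (ηk • Hess xk - Hk).PosSemidef := by
    have h := hs2.add (psd_smul' hQpd.posSemidef (sub_nonneg.mpr hmax2))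
    have hid : (lamMax ((Hess xk)⁻¹ * Hk) • Hess xk - Hk)
        + (ηk - lamMax ((Hess xk)⁻¹ * Hk)) • Hess xk = ηk • Hess xk - Hk := by module
    rwa [hid] at h
  -- a nonzero test vector
  set v0 : Fin n → ℝ := Pi.single ⟨0, hn⟩ (1:ℝ) with hv0def
  have hv0 : v0 ≠ 0 := by
    intro h
    have := congrFun h ⟨0, hn⟩
    simp [hv0def] at this
  have hdQ : 0 < star v0 ⬝ᵥ (Hess xk) *ᵥ v0 := hQpd.dotProduct_mulVec_pos hv0
  have hdH : 0 < star v0 ⬝ᵥ Hk *ᵥ v0 := hHk.dotProduct_mulVec_pos hv0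
  have hη0 : 0 < ηk := by
    have h := hHη.dotProduct_mulVec_nonneg v0
    rw [Matrix.sub_mulVec, Matrix.smul_mulVec, dotProduct_sub,
      dotProduct_smul, smul_eq_mul] at h
    nlinarith
  have hη1 : 1 ≤ ηk := by
    have h := ((psd_smul' hQη hη0.le).add hHη).dotProduct_mulVec_nonneg v0
    rw [Matrix.add_mulVec, dotProduct_add, Matrix.smul_mulVec,
      dotProduct_smul, Matrix.sub_mulVec, Matrix.sub_mulVec,
      Matrix.smul_mulVec, Matrix.smul_mulVec] at h
    simp only [dotProduct_sub, dotProduct_smul, smul_eq_mul] at h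
    have h2 : 0 ≤ (ηk * ηk - 1) * (star v0 ⬝ᵥ Hk *ᵥ v0) := by nlinarith [h]
    have h3 : 1 ≤ ηk * ηk := by nlinarith [h2, hdH]
    nlinarith [h3, hη0]
  have hL : 0 < L := lt_of_lt_of_le hμ hμL
  have hLη : 0 < L * ηk := mul_pos hL hη0
  have hμLη : μ ≤ L * ηk := by nlinarith
  have hγ1 : γ ≤ 1 := le_trans hγ ((div_le_one hLη).mpr hμLη)
  -- segment membership
  have hseg : ∀ y ∈ X, ∀ s ∈ Set.Icc (0:ℝ) 1, xk + s • (y - xk) ∈ X := by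
    intro y hy s hs
    have h := hconv hxk hy (sub_nonneg.mpr hs.2) hs.1 (by ring)
    have hid : xk + s • (y - xk) = (1 - s) • xk + s • y := by module
    rwa [hid]
  -- smoothness upper bound along the step
  have hup : f xk1 ≤ f xk + γ * ⟪gradient f xk, xt - xk⟫
      + (L * (γ ^ 2 * qForm 1 (xt - xk))) / 2 := by
    rw [hxk1]
    have h := taylor_upper f hdf Hess hHess xk (γ • (xt - xk))
      (L * (γ ^ 2 * qForm 1 (xt - xk))) ?_
    · rwa [real_inner_smul_right] at h
    · intro t ht
      have hpt : xk + t • (γ • (xt - xk)) = xk + (t * γ) • (xt - xk) := by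
        rw [smul_smul]
      have hmem : xk + t • (γ • (xt - xk)) ∈ X := by
        rw [hpt]
        refine hseg xt hxtX (t * γ) ⟨mul_nonneg ht.1 hγ0.le, ?_⟩
        nlinarith [ht.2, hγ1, hγ0.le, ht.1]
      have hb2 := (hbound _ hmem).2
      have h1 : qForm (Hess (xk + t • (γ • (xt - xk)))) (xt - xk)
          ≤ qForm (L • (1 : Matrix (Fin n) (Fin n) ℝ)) (xt - xk) := qForm_mono hb2 _
      rw [qForm_smul_mat] at h1
      rw [qForm_smul_vec]
      have h0 : 0 ≤ qForm 1 (xt - xk) := by rw [qForm_one]; exact real_inner_self_nonneg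
      nlinarith [sq_nonneg γ]
  -- strong convexity lower bound toward xstar
  have hlow : f xk + ⟪gradient f xk, xstar - xk⟫ + (μ * qForm 1 (xstar - xk)) / 2 ≤ f xstar := by
    have h := taylor_lower f hdf Hess hHess xk (xstar - xk) (μ * qForm 1 (xstar - xk)) ?_
    · rwa [add_sub_cancel] at h
    · intro t ht
      have hmem := hseg xstar hxstar t ht
      have hb1 := (hbound _ hmem).1
      have h1 : qForm (μ • (1 : Matrix (Fin n) (Fin n) ℝ)) (xstar - xk)
          ≤ qForm (Hess (xk + t • (xstar - xk))) (xstar - xk) := qForm_mono hb1 _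
      rwa [qForm_smul_mat] at h1
  -- model optimality
  set β : ℝ := μ / (L * ηk) with hβ
  have hβ0 : 0 < β := div_pos hμ hLη
  have hβ1 : β ≤ 1 := (div_le_one hLη).mpr hμLη
  have hβμ : β * (L * ηk) = μ := div_mul_cancel₀ μ (ne_of_gt hLη)
  have hw : xk + β • (xstar - xk) ∈ X := hseg xstar hxstar β ⟨hβ0.le, hβ1⟩
  have hmod := hxtmin _ hw
  rw [hfhat, hfhat, add_sub_cancel_left] at hmod
  rw [real_inner_smul_right, qForm_smul_vec] at hmod
  -- bound for qForm Hk (xstar - xk)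
  have hKe : qForm Hk (xstar - xk) ≤ (ηk * L) * qForm 1 (xstar - xk) := by
    have hpsd : ((ηk * L) • (1 : Matrix (Fin n) (Fin n) ℝ) - Hk).PosSemidef := by
      have h := (psd_smul' hbk.2 hη0.le).add hHη
      have hid : ηk • (L • (1 : Matrix (Fin n) (Fin n) ℝ) - Hess xk)
          + (ηk • Hess xk - Hk) = (ηk * L) • (1 : Matrix (Fin n) (Fin n) ℝ) - Hk := by
        module
      rwa [hid] at h
    have h1 := qForm_mono hpsd (xstar - xk)
    rwa [qForm_smul_mat] at h1
  have hKd0 : 0 ≤ qForm Hk (xt - xk) := qForm_nonneg hHk.posSemidef _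
  have hNd : μ * qForm 1 (xt - xk) ≤ ηk * qForm Hk (xt - xk) := by
    have hpsd : (ηk • Hk - μ • (1 : Matrix (Fin n) (Fin n) ℝ)).PosSemidef := by
      have h := hQη.add hbk.1
      have hid : (ηk • Hk - Hess xk) + (Hess xk - μ • (1 : Matrix (Fin n) (Fin n) ℝ))
          = ηk • Hk - μ • (1 : Matrix (Fin n) (Fin n) ℝ) := by module
      rwa [hid] at h
    have h1 := qForm_mono hpsd (xt - xk)
    rwa [qForm_smul_mat, qForm_smul_mat] at h1
  have hNe0 : 0 ≤ qForm 1 (xstar - xk) := by rw [qForm_one]; exact real_inner_self_nonneg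
  -- combine: model value bound
  have hT : ⟪gradient f xk, xt - xk⟫ + qForm Hk (xt - xk) / 2 ≤ β * (f xstar - f xk) := by
    have hA : β ^ 2 * qForm Hk (xstar - xk) ≤ β * (μ * qForm 1 (xstar - xk)) := by
      calc β ^ 2 * qForm Hk (xstar - xk)
          ≤ β ^ 2 * ((ηk * L) * qForm 1 (xstar - xk)) :=
            mul_le_mul_of_nonneg_left hKe (sq_nonneg β)
        _ = β * (β * (L * ηk) * qForm 1 (xstar - xk)) := by ring
        _ = β * (μ * qForm 1 (xstar - xk)) := by rw [hβμ]
    have hB : β * ⟪gradient f xk, xstar - xk⟫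
        ≤ β * (f xstar - f xk - μ * qForm 1 (xstar - xk) / 2) :=
      mul_le_mul_of_nonneg_left (by linarith [hlow]) hβ0.le
    linarith [hmod, hA, hB]
  -- smoothness term bound
  have hstep : L * (γ ^ 2 * qForm 1 (xt - xk)) ≤ γ * qForm Hk (xt - xk) := by
    have hB : γ * (L * ηk) ≤ μ := (le_div_iff₀ hLη).mp hγ
    nlinarith [mul_le_mul_of_nonneg_left hNd (mul_nonneg hL.le (sq_nonneg γ)),
      mul_le_mul_of_nonneg_right hB (mul_nonneg hγ0.le hKd0)]
  -- final chain
  have hfinal : f xk1 ≤ f xk + γ * (β * (f xstar - f xk)) := by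
    have h1 : γ * (⟪gradient f xk, xt - xk⟫ + qForm Hk (xt - xk) / 2)
        ≤ γ * (β * (f xstar - f xk)) := mul_le_mul_of_nonneg_left hT hγ0.le
    nlinarith [hup, hstep]
  have hfd : 0 ≤ f xk - f xstar := sub_nonneg.mpr (hminstar xk hxk)
  have hcoef : μ * γ ^ 2 / (L * ηk) ≤ γ * β := by
    rw [hβ, mul_div_assoc' γ μ (L * ηk)]
    exact (div_le_div_iff_of_pos_right hLη).mpr (by nlinarith [mul_le_mul_of_nonneg_right hγ1 (mul_nonneg hγ0.le hμ.le)])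
  have hfinal2 := mul_le_mul_of_nonneg_right hcoef hfd
  nlinarith [hfinal, hfinal2, mul_le_mul_of_nonneg_right hcoef hfd]
end

section
/- Let X ⊆ ℝⁿ be a nonempty compact convex set and f : ℝⁿ → ℝ twice continuously differentiable with μ·I ⪯ ∇²f(x) ⪯ L·I for all x ∈ X (0 < μ ≤ L), with unique minimizer x* over X. Fix x_k ∈ X, a symmetric positive definite H_k, and set η_k := max{λ_max(H_k⁻¹∇²f(x_k)), λ_max((∇²f(x_k))⁻¹H_k)}. Let x̃*_{k+1} := argmin_{x∈X} ( f(x_k) + ⟨∇f(x_k), x − x_k⟩ + ½‖x − x_k‖²_{H_k} ), set γ_k := μ/(L·η_k), and let x_{k+1} ∈ X be any point with f(x_{k+1}) ≤ f(x_k + γ_k (x̃*_{k+1} − x_k)) (e.g. the output of an exact line search, or the point x_k + γ_k(x̃*_{k+1} − x_k) itself). Then f(x_{k+1}) − f(x*) ≤ (1 − μ³/(L³η_k³)) · (f(x_k) − f(x*)). -/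
open Matrix
open scoped RealInnerProductSpace

/-! ### Auxiliary lemmas: matrix action and quadratic forms -/

lemma mApply_coord {n : ℕ} (M : Matrix (Fin n) (Fin n) ℝ) (v : EuclideanSpace ℝ (Fin n))
    (i : Fin n) : mApply M v i = (M *ᵥ (v : Fin n → ℝ)) i := by
  have := Matrix.ofLp_toEuclideanCLM (𝕜 := ℝ) (n := Fin n) M v
  exact congrFun this i

lemma inner_mApply {n : ℕ} (M : Matrix (Fin n) (Fin n) ℝ) (v w : EuclideanSpace ℝ (Fin n)) :
    ⟪v, mApply M w⟫ = (v : Fin n → ℝ) ⬝ᵥ (M *ᵥ (w : Fin n → ℝ)) := by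
  rw [PiLp.inner_apply, dotProduct]
  exact Finset.sum_congr rfl fun i _ => by rw [mApply_coord]; simp [mul_comm]

lemma mApply_mul {n : ℕ} (M N : Matrix (Fin n) (Fin n) ℝ) (v : EuclideanSpace ℝ (Fin n)) :
    mApply (M * N) v = mApply M (mApply N v) := by
  simp [mApply, _root_.map_mul]

lemma mApply_one {n : ℕ} (v : EuclideanSpace ℝ (Fin n)) : mApply 1 v = v := by
  simp [mApply]

lemma mApply_smul {n : ℕ} (c : ℝ) (M : Matrix (Fin n) (Fin n) ℝ) (v : EuclideanSpace ℝ (Fin n)) :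
    mApply (c • M) v = c • mApply M v := by
  simp [mApply]

lemma mApply_smul_vec {n : ℕ} (c : ℝ) (M : Matrix (Fin n) (Fin n) ℝ)
    (v : EuclideanSpace ℝ (Fin n)) : mApply M (c • v) = c • mApply M v := by
  simp [mApply]

lemma mApply_sub {n : ℕ} (M N : Matrix (Fin n) (Fin n) ℝ) (v : EuclideanSpace ℝ (Fin n)) :
    mApply (M - N) v = mApply M v - mApply N v := by
  simp [mApply]

lemma psd_inner_nonneg {n : ℕ} {M : Matrix (Fin n) (Fin n) ℝ} (hM : M.PosSemidef)
    (v : EuclideanSpace ℝ (Fin n)) : 0 ≤ ⟪v, mApply M v⟫ := by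
  rw [inner_mApply]; simpa using hM.dotProduct_mulVec_nonneg (v : Fin n → ℝ)

lemma pd_inner_pos {n : ℕ} {M : Matrix (Fin n) (Fin n) ℝ} (hM : M.PosDef)
    {v : EuclideanSpace ℝ (Fin n)} (hv : v ≠ 0) : 0 < ⟪v, mApply M v⟫ := by
  rw [inner_mApply]
  have := hM.dotProduct_mulVec_pos (x := (v : Fin n → ℝ)) (by simpa using hv)
  simpa using this

lemma mApply_symm {n : ℕ} {M : Matrix (Fin n) (Fin n) ℝ} (hM : M.IsHermitian)
    (x y : EuclideanSpace ℝ (Fin n)) : ⟪mApply M x, y⟫ = ⟪x, mApply M y⟫ := by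
  have h := (Matrix.isHermitian_iff_isSymmetric (A := M)).mp hM
  have h2 := h x y
  rw [← Matrix.coe_toEuclideanCLM_eq_toEuclideanLin] at h2
  exact h2

/-! ### Spectral lemmas -/

lemma herm_qform_le_lamMax' {n : ℕ} {A : Matrix (Fin n) (Fin n) ℝ} (hA : A.IsHermitian)
    (v : EuclideanSpace ℝ (Fin n)) : ⟪v, mApply A v⟫ ≤ lamMax A * ⟪v, v⟫ := by
  have hbdd : BddAbove (spectrum ℝ A) := (Matrix.finite_spectrum A).bddAbove
  have heig : ∀ i, hA.eigenvalues i ≤ lamMax A := fun i =>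
    le_csSup hbdd (hA.eigenvalues_mem_spectrum_real i)
  set U : Matrix (Fin n) (Fin n) ℝ := (hA.eigenvectorUnitary : Matrix (Fin n) (Fin n) ℝ) with hUdef
  have hU1 : U * star U = 1 := Matrix.mem_unitaryGroup_iff.mp hA.eigenvectorUnitary.2
  have key : ∀ x y : Fin n → ℝ, (star U *ᵥ x) ⬝ᵥ y = x ⬝ᵥ (U *ᵥ y) := by
    intro x y
    rw [Matrix.star_eq_conjTranspose, Matrix.conjTranspose_eq_transpose_of_trivial,
      Matrix.mulVec_transpose, ← Matrix.dotProduct_mulVec]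
  set w : Fin n → ℝ := star U *ᵥ (v : Fin n → ℝ) with hw
  have h1 : ⟪v, mApply A v⟫ = w ⬝ᵥ (Matrix.diagonal (RCLike.ofReal ∘ hA.eigenvalues) *ᵥ w) := by
    rw [inner_mApply]
    conv_lhs => rw [hA.spectral_theorem, Unitary.conjStarAlgAut_apply]
    rw [← Matrix.mulVec_mulVec, ← Matrix.mulVec_mulVec, ← key]
  have h2 : ⟪v, v⟫ = w ⬝ᵥ w := by
    rw [hw, key, Matrix.mulVec_mulVec, hU1, Matrix.one_mulVec, PiLp.inner_apply, dotProduct]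
    rfl
  rw [h1, h2, dotProduct, dotProduct, Finset.mul_sum]
  apply Finset.sum_le_sum
  intro i _
  rw [Matrix.mulVec_diagonal]
  have hco : (RCLike.ofReal ∘ hA.eigenvalues) i = hA.eigenvalues i := rfl
  rw [hco]
  nlinarith [heig i, mul_self_nonneg (w i)]

open scoped MatrixOrder in
/-- generalized eigenvalue bound: for PD `P` and Hermitian `Q`,
`⟪d, Q d⟫ ≤ lamMax (P⁻¹ * Q) * ⟪d, P d⟫`. -/
lemma qform_le_lamMax_qform {n : ℕ} {P Q : Matrix (Fin n) (Fin n) ℝ}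
    (hP : P.PosDef) (hQ : Q.IsHermitian) (d : EuclideanSpace ℝ (Fin n)) :
    ⟪d, mApply Q d⟫ ≤ lamMax (P⁻¹ * Q) * ⟪d, mApply P d⟫ := by
  set R : Matrix (Fin n) (Fin n) ℝ := CFC.sqrt P with hRdef
  have hRps : R.PosSemidef := (CFC.sqrt_nonneg P).posSemidef
  have hRR : R * R = P := CFC.sqrt_mul_sqrt_self P hP.posSemidef.nonneg
  have hdetP : 0 < P.det := hP.det_pos
  have hdetR : R.det ≠ 0 := by
    intro h
    rw [← hRR, Matrix.det_mul, h, mul_zero] at hdetP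
    exact lt_irrefl _ hdetP
  have hRunit : IsUnit R := (Matrix.isUnit_iff_isUnit_det R).mpr (isUnit_iff_ne_zero.mpr hdetR)
  have hRinv : R * R⁻¹ = 1 := Matrix.mul_nonsing_inv R (isUnit_iff_ne_zero.mpr hdetR)
  have hRinv' : R⁻¹ * R = 1 := Matrix.nonsing_inv_mul R (isUnit_iff_ne_zero.mpr hdetR)
  set A : Matrix (Fin n) (Fin n) ℝ := R⁻¹ * Q * R⁻¹ with hAdef
  have hRherm : R.IsHermitian := hRps.1
  have hRinvherm : (R⁻¹).IsHermitian := hRherm.inv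
  have hAherm : A.IsHermitian := by
    unfold Matrix.IsHermitian
    rw [hAdef, Matrix.conjTranspose_mul, Matrix.conjTranspose_mul, hRinvherm, hQ, ← mul_assoc]
  have hspec : spectrum ℝ A = spectrum ℝ (P⁻¹ * Q) := by
    have hPinv : P⁻¹ = R⁻¹ * R⁻¹ := by rw [← hRR, Matrix.mul_inv_rev]
    let u : (Matrix (Fin n) (Fin n) ℝ)ˣ := hRunit.unit
    have hu : (u : Matrix (Fin n) (Fin n) ℝ) = R := hRunit.unit_spec
    have hu' : ((u⁻¹ : (Matrix (Fin n) (Fin n) ℝ)ˣ) : Matrix (Fin n) (Fin n) ℝ) = R⁻¹ := by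
      rw [Matrix.coe_units_inv u, hu]
    have hc := spectrum.units_conjugate (R := ℝ) (a := P⁻¹ * Q) (u := u)
    rw [hu, hu'] at hc
    rw [← hc]
    congr 1
    rw [hAdef, hPinv, ← mul_assoc R (R⁻¹ * R⁻¹) Q, ← mul_assoc R R⁻¹ R⁻¹, hRinv, one_mul]
  have hlam : lamMax A = lamMax (P⁻¹ * Q) := by rw [lamMax, lamMax, hspec]
  have hmain := herm_qform_le_lamMax' hAherm (mApply R d)
  have hAR : A * R = R⁻¹ * Q := by rw [hAdef, mul_assoc, hRinv', mul_one]
  have e1 : ⟪mApply R d, mApply A (mApply R d)⟫ = ⟪d, mApply Q d⟫ := by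
    rw [← mApply_mul, hAR, mApply_mul, mApply_symm hRherm, ← mApply_mul, hRinv, mApply_one]
  have e2 : ⟪mApply R d, mApply R d⟫ = ⟪d, mApply P d⟫ := by
    rw [mApply_symm hRherm, ← mApply_mul, hRR]
  rw [e1, e2, hlam] at hmain
  exact hmain

/-! ### Analytic lemmas -/

section analytic
variable {n : ℕ} {f : EuclideanSpace ℝ (Fin n) → ℝ}
  {Hess : EuclideanSpace ℝ (Fin n) → Matrix (Fin n) (Fin n) ℝ}

lemma hasDerivAt_comp_line (hfd : Differentiable ℝ f)
    (x d : EuclideanSpace ℝ (Fin n)) (t : ℝ) :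
    HasDerivAt (fun s : ℝ => f (x + s • d)) ⟪gradient f (x + t • d), d⟫ t := by
  have hline : HasDerivAt (fun s : ℝ => x + s • d) d t := by
    simpa using ((hasDerivAt_id t).smul_const d).const_add x
  have hg : HasGradientAt f (gradient f (x + t • d)) (x + t • d) :=
    (hfd (x + t • d)).hasGradientAt
  have hF : HasFDerivAt f ((InnerProductSpace.toDual ℝ _) (gradient f (x + t • d))) (x + t • d) :=
    hasGradientAt_iff_hasFDerivAt.mp hg
  have := hF.comp_hasDerivAt t hline
  simpa [InnerProductSpace.toDual_apply_apply, Function.comp_def] using this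

lemma hasDerivAt_dirDeriv_line
    (hHess : ∀ x, HasFDerivAt (gradient f) (Matrix.toEuclideanCLM (𝕜 := ℝ) (Hess x)) x)
    (x d : EuclideanSpace ℝ (Fin n)) (t : ℝ) :
    HasDerivAt (fun s : ℝ => ⟪gradient f (x + s • d), d⟫)
      ⟪mApply (Hess (x + t • d)) d, d⟫ t := by
  have hline : HasDerivAt (fun s : ℝ => x + s • d) d t := by
    simpa using ((hasDerivAt_id t).smul_const d).const_add x
  have h1 : HasDerivAt (fun s : ℝ => gradient f (x + s • d))
      (mApply (Hess (x + t • d)) d) t := by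
    have := (hHess (x + t • d)).comp_hasDerivAt t hline
    simpa [mApply, Function.comp_def] using this
  have h2 : HasDerivAt (fun _ : ℝ => d) (0 : EuclideanSpace ℝ (Fin n)) t := hasDerivAt_const t d
  have := h1.inner ℝ h2
  simpa using this

lemma taylor_upper_s9 (φ ψ ρ : ℝ → ℝ) (c : ℝ)
    (hφ : ∀ t, HasDerivAt φ (ψ t) t)
    (hψ : ∀ t, HasDerivAt ψ (ρ t) t)
    (hbound : ∀ t ∈ Set.Icc (0:ℝ) 1, ρ t ≤ c) :
    φ 1 ≤ φ 0 + ψ 0 + c / 2 := by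
  have hψc : Continuous ψ := continuous_iff_continuousAt.mpr fun s => (hψ s).continuousAt
  have hφc : Continuous φ := continuous_iff_continuousAt.mpr fun s => (hφ s).continuousAt
  have hd1 : ∀ x : ℝ, HasDerivAt (fun s => ψ s - c * s) (ρ x - c) x := fun x =>
    (hψ x).sub (by simpa using (hasDerivAt_id x).const_mul c)
  have step1 : ∀ t ∈ Set.Icc (0:ℝ) 1, ψ t ≤ ψ 0 + c * t := by
    intro t ht
    have hanti : AntitoneOn (fun s => ψ s - c * s) (Set.Icc (0:ℝ) 1) := by
      apply antitoneOn_of_deriv_nonpos (convex_Icc 0 1)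
      · exact (hψc.sub (continuous_const.mul continuous_id)).continuousOn
      · intro x hx
        exact (hd1 x).differentiableAt.differentiableWithinAt
      · intro x hx
        rw [(hd1 x).deriv]
        have hx' : x ∈ Set.Icc (0:ℝ) 1 := interior_subset hx
        linarith [hbound x hx']
    have := hanti (Set.left_mem_Icc.mpr zero_le_one) ht ht.1
    simp only at this
    linarith
  have hd2 : ∀ x : ℝ, HasDerivAt (fun s => φ s - (ψ 0 * s + c * s ^ 2 / 2))
      (ψ x - (ψ 0 + c * x)) x := by
    intro x
    have h1 : HasDerivAt (fun s : ℝ => ψ 0 * s + c * s ^ 2 / 2) (ψ 0 + c * x) x := by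
      have ha : HasDerivAt (fun s : ℝ => ψ 0 * s) (ψ 0) x := by
        simpa using (hasDerivAt_id x).const_mul (ψ 0)
      have hb : HasDerivAt (fun s : ℝ => c * s ^ 2 / 2) (c * x) x := by
        have hp : HasDerivAt (fun s : ℝ => s ^ 2) (2 * x) x := by
          simpa using hasDerivAt_pow 2 x
        have := (hp.const_mul c).div_const 2
        exact this.congr_deriv (by ring)
      exact ha.add hb
    exact (hφ x).sub h1
  have hanti2 : AntitoneOn (fun s => φ s - (ψ 0 * s + c * s ^ 2 / 2)) (Set.Icc (0:ℝ) 1) := by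
    apply antitoneOn_of_deriv_nonpos (convex_Icc 0 1)
    · exact (hφc.sub ((continuous_const.mul continuous_id).add
        ((continuous_const.mul (continuous_pow 2)).div_const 2))).continuousOn
    · intro x hx
      exact (hd2 x).differentiableAt.differentiableWithinAt
    · intro x hx
      rw [(hd2 x).deriv]
      have hx' : x ∈ Set.Icc (0:ℝ) 1 := interior_subset hx
      linarith [step1 x hx']
  have := hanti2 (Set.left_mem_Icc.mpr zero_le_one)
    (Set.right_mem_Icc.mpr zero_le_one) zero_le_one
  simp only at this
  nlinarith [this]

variable {X : Set (EuclideanSpace ℝ (Fin n))}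

/-- Taylor smoothness upper bound on a convex set. -/
lemma smooth_upper (hconv : Convex ℝ X) (hfd : Differentiable ℝ f)
    (hHess : ∀ x, HasFDerivAt (gradient f) (Matrix.toEuclideanCLM (𝕜 := ℝ) (Hess x)) x)
    {L : ℝ}
    (hup : ∀ z ∈ X, ∀ v : EuclideanSpace ℝ (Fin n), ⟪v, mApply (Hess z) v⟫ ≤ L * ⟪v, v⟫)
    {x y : EuclideanSpace ℝ (Fin n)} (hx : x ∈ X) (hy : y ∈ X) :
    f y ≤ f x + ⟪gradient f x, y - x⟫ + L / 2 * ⟪y - x, y - x⟫ := by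
  set d := y - x with hd
  have key := taylor_upper_s9 (fun t => f (x + t • d))
    (fun t => ⟪gradient f (x + t • d), d⟫)
    (fun t => ⟪mApply (Hess (x + t • d)) d, d⟫) (L * ⟪d, d⟫)
    (fun t => hasDerivAt_comp_line hfd x d t)
    (fun t => hasDerivAt_dirDeriv_line hHess x d t)
    (by
      intro t ht
      have hmem : x + t • d ∈ X := hconv.add_smul_sub_mem hx hy ht
      have := hup _ hmem d
      rwa [real_inner_comm])
  simp only [zero_smul, add_zero, one_smul] at key
  rw [hd] at key ⊢
  simp only [add_sub_cancel] at key
  linarith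

/-- Taylor strong-convexity lower bound on a convex set. -/
lemma smooth_lower (hconv : Convex ℝ X) (hfd : Differentiable ℝ f)
    (hHess : ∀ x, HasFDerivAt (gradient f) (Matrix.toEuclideanCLM (𝕜 := ℝ) (Hess x)) x)
    {μ : ℝ}
    (hlo : ∀ z ∈ X, ∀ v : EuclideanSpace ℝ (Fin n), μ * ⟪v, v⟫ ≤ ⟪v, mApply (Hess z) v⟫)
    {x y : EuclideanSpace ℝ (Fin n)} (hx : x ∈ X) (hy : y ∈ X) :
    f x + ⟪gradient f x, y - x⟫ + μ / 2 * ⟪y - x, y - x⟫ ≤ f y := by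
  set d := y - x with hd
  have key := taylor_upper_s9 (fun t => -f (x + t • d))
    (fun t => -⟪gradient f (x + t • d), d⟫)
    (fun t => -⟪mApply (Hess (x + t • d)) d, d⟫) (-(μ * ⟪d, d⟫))
    (fun t => (hasDerivAt_comp_line hfd x d t).neg)
    (fun t => (hasDerivAt_dirDeriv_line hHess x d t).neg)
    (by
      intro t ht
      have hmem : x + t • d ∈ X := hconv.add_smul_sub_mem hx hy ht
      have := hlo _ hmem d
      rw [real_inner_comm]
      linarith)
  simp only [zero_smul, add_zero, one_smul] at key
  rw [hd] at key ⊢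
  simp only [add_sub_cancel] at key
  linarith

end analytic

lemma key_arith (γ L fy fxk gd ge dd qq QQ D : ℝ)
    (h1 : fy ≤ fxk + γ * gd + L / 2 * (γ ^ 2 * dd))
    (h2 : L * (γ ^ 2 * dd) ≤ γ * qq)
    (h3 : γ * (gd + 1 / 2 * qq) ≤ γ * (γ * ge + γ ^ 2 / 2 * QQ))
    (h4 : γ ^ 3 / 2 * QQ ≤ γ ^ 2 * (-D - ge)) :
    fy ≤ fxk - γ ^ 2 * D := by linarith

lemma final_arith (γ fxk1 fxk fxstar D : ℝ) (hD : D = fxk - fxstar)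
    (h1 : fxk1 ≤ fxk - γ ^ 2 * D) (h2 : γ ^ 3 * D ≤ γ ^ 2 * D) :
    fxk1 - fxstar ≤ (1 - γ ^ 3) * D := by nlinarith

/-- global convergence of the PVM step with exact line search or
`γ_k = μ/(Lη_k)`: with the setup of the PVM step and any `x_{k+1} ∈ X` with
`f(x_{k+1}) ≤ f(x_k + γ_k(x̃*_{k+1} − x_k))` where `γ_k = μ/(Lη_k)`, one has
`f(x_{k+1}) − f(x*) ≤ (1 − μ³/(L³η_k³))(f(x_k) − f(x*))`. -/
theorem socgs_pvm_global_line_search {n : ℕ}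
    (X : Set (EuclideanSpace ℝ (Fin n)))
    (hne : X.Nonempty) (hcomp : IsCompact X) (hconv : Convex ℝ X)
    (f : EuclideanSpace ℝ (Fin n) → ℝ) (hf : ContDiff ℝ 2 f)
    (Hess : EuclideanSpace ℝ (Fin n) → Matrix (Fin n) (Fin n) ℝ)
    (hHess : ∀ x, HasFDerivAt (gradient f) (Matrix.toEuclideanCLM (𝕜 := ℝ) (Hess x)) x)
    (μ L : ℝ) (hμ : 0 < μ) (hμL : μ ≤ L)
    (hbound : ∀ x ∈ X, (Hess x - μ • (1 : Matrix (Fin n) (Fin n) ℝ)).PosSemidef ∧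
      (L • (1 : Matrix (Fin n) (Fin n) ℝ) - Hess x).PosSemidef)
    (xstar : EuclideanSpace ℝ (Fin n)) (hxstar : xstar ∈ X)
    (hminstar : ∀ y ∈ X, f xstar ≤ f y)
    (huniq : ∀ z ∈ X, (∀ y ∈ X, f z ≤ f y) → z = xstar)
    (xk : EuclideanSpace ℝ (Fin n)) (hxk : xk ∈ X)
    (Hk : Matrix (Fin n) (Fin n) ℝ) (hHk : Hk.PosDef)
    (ηk : ℝ) (hηk : ηk = max (lamMax (Hk⁻¹ * Hess xk)) (lamMax ((Hess xk)⁻¹ * Hk)))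
    (fhat : EuclideanSpace ℝ (Fin n) → ℝ)
    (hfhat : ∀ x, fhat x =
      f xk + ⟪gradient f xk, x - xk⟫ + (1 / 2) * qForm Hk (x - xk))
    (xt : EuclideanSpace ℝ (Fin n)) (hxtX : xt ∈ X)
    (hxtmin : ∀ w ∈ X, fhat xt ≤ fhat w)
    (γ : ℝ) (hγ : γ = μ / (L * ηk))
    (xk1 : EuclideanSpace ℝ (Fin n)) (hxk1X : xk1 ∈ X)
    (hxk1 : f xk1 ≤ f (xk + γ • (xt - xk))) :
    f xk1 - f xstar ≤ (1 - μ ^ 3 / (L ^ 3 * ηk ^ 3)) * (f xk - f xstar) := by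
  -- trivial case n = 0
  rcases Nat.eq_zero_or_pos n with hn | hn
  · subst hn
    haveI : Subsingleton (EuclideanSpace ℝ (Fin 0)) :=
      ⟨fun a b => by ext i; exact i.elim0⟩
    have h1 : xk1 = xstar := Subsingleton.elim _ _
    have h2 : xk = xstar := Subsingleton.elim _ _
    rw [h1, h2, sub_self, mul_zero]
  -- main case
  have hL : 0 < L := lt_of_lt_of_le hμ hμL
  have hfd : Differentiable ℝ f := hf.differentiable (by norm_num)
  -- quadratic form bounds from the Hessian bounds
  have hup : ∀ z ∈ X, ∀ v : EuclideanSpace ℝ (Fin n),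
      ⟪v, mApply (Hess z) v⟫ ≤ L * ⟪v, v⟫ := by
    intro z hz v
    have h := psd_inner_nonneg (hbound z hz).2 v
    rw [mApply_sub, mApply_smul, mApply_one, inner_sub_right, real_inner_smul_right] at h
    linarith
  have hlo : ∀ z ∈ X, ∀ v : EuclideanSpace ℝ (Fin n),
      μ * ⟪v, v⟫ ≤ ⟪v, mApply (Hess z) v⟫ := by
    intro z hz v
    have h := psd_inner_nonneg (hbound z hz).1 v
    rw [mApply_sub, mApply_smul, mApply_one, inner_sub_right, real_inner_smul_right] at h
    linarith
  set G : Matrix (Fin n) (Fin n) ℝ := Hess xk with hGdef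
  -- G is Hermitian and positive definite
  have hGherm : G.IsHermitian := by
    have h1 : (G - μ • (1 : Matrix (Fin n) (Fin n) ℝ)).IsHermitian := (hbound xk hxk).1.1
    have h2 : (μ • (1 : Matrix (Fin n) (Fin n) ℝ)).IsHermitian := by
      unfold Matrix.IsHermitian
      simp
    have := h1.add h2
    simpa using this
  have hGpd : G.PosDef := by
    refine Matrix.posDef_iff_dotProduct_mulVec.mpr ⟨hGherm, fun x hx => ?_⟩
    have hxne : (WithLp.equiv 2 _).symm x ≠ (0 : EuclideanSpace ℝ (Fin n)) := by
      simpa using hx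
    have h := hlo xk hxk ((WithLp.equiv 2 _).symm x)
    have hpos : 0 < ⟪((WithLp.equiv 2 _).symm x : EuclideanSpace ℝ (Fin n)),
        ((WithLp.equiv 2 _).symm x : EuclideanSpace ℝ (Fin n))⟫ := by
      rw [real_inner_self_eq_norm_sq]
      exact pow_pos (norm_pos_iff.mpr hxne) 2
    have h2 : (0:ℝ) < ⟪((WithLp.equiv 2 _).symm x : EuclideanSpace ℝ (Fin n)),
        mApply G ((WithLp.equiv 2 _).symm x)⟫ :=
      lt_of_lt_of_le (mul_pos hμ hpos) h
    rw [inner_mApply] at h2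
    simpa using h2
  -- ηk bounds
  have hη1 : lamMax (Hk⁻¹ * G) ≤ ηk := hηk ▸ le_max_left _ _
  have hη2 : lamMax (G⁻¹ * Hk) ≤ ηk := hηk ▸ le_max_right _ _
  -- quadratic form comparison
  have hGq_nonneg : ∀ v : EuclideanSpace ℝ (Fin n), 0 ≤ ⟪v, mApply G v⟫ := by
    intro v
    have h := hlo xk hxk v
    have h2 : (0:ℝ) ≤ ⟪v, v⟫ := real_inner_self_nonneg
    nlinarith
  have hHq_nonneg : ∀ v : EuclideanSpace ℝ (Fin n), 0 ≤ ⟪v, mApply Hk v⟫ :=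
    fun v => psd_inner_nonneg hHk.posSemidef v
  have hC1 : ∀ v : EuclideanSpace ℝ (Fin n),
      ⟪v, mApply Hk v⟫ ≤ ηk * ⟪v, mApply G v⟫ := by
    intro v
    have h := qform_le_lamMax_qform hGpd hHk.1 v
    have := mul_le_mul_of_nonneg_right hη2 (hGq_nonneg v)
    linarith
  have hC2 : ∀ v : EuclideanSpace ℝ (Fin n),
      ⟪v, mApply G v⟫ ≤ ηk * ⟪v, mApply Hk v⟫ := by
    intro v
    have h := qform_le_lamMax_qform hHk hGherm v
    have := mul_le_mul_of_nonneg_right hη1 (hHq_nonneg v)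
    linarith
  -- ηk is positive and μ ≤ ηk² L
  obtain ⟨i0⟩ : Nonempty (Fin n) := ⟨⟨0, hn⟩⟩
  set v0 : EuclideanSpace ℝ (Fin n) := EuclideanSpace.single i0 1 with hv0
  have hv0ne : v0 ≠ 0 := by
    intro h
    have := congrFun (congrArg (WithLp.equiv 2 _) h) i0
    simp [hv0] at this
  have hv0pos : 0 < ⟪v0, v0⟫ := by
    rw [real_inner_self_eq_norm_sq]
    exact pow_pos (norm_pos_iff.mpr hv0ne) 2
  have hηpos : 0 < ηk := by
    have h1 := hlo xk hxk v0
    have h2 := hC2 v0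
    have h3 : 0 < ⟪v0, mApply Hk v0⟫ := pd_inner_pos hHk hv0ne
    have h5 : 0 < ηk * ⟪v0, mApply Hk v0⟫ :=
      lt_of_lt_of_le (mul_pos hμ hv0pos) (le_trans h1 h2)
    rcases mul_pos_iff.mp h5 with ⟨ha, _⟩ | ⟨_, hb⟩
    · exact ha
    · linarith
  have hμη : μ ≤ ηk ^ 2 * L := by
    have h1 := hlo xk hxk v0
    have h2 := hC2 v0
    have h3 := hC1 v0
    have h4 := hup xk hxk v0
    have hchain : μ * ⟪v0, v0⟫ ≤ ηk ^ 2 * L * ⟪v0, v0⟫ := by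
      calc μ * ⟪v0, v0⟫ ≤ ⟪v0, mApply G v0⟫ := h1
      _ ≤ ηk * ⟪v0, mApply Hk v0⟫ := h2
      _ ≤ ηk * (ηk * ⟪v0, mApply G v0⟫) := mul_le_mul_of_nonneg_left h3 hηpos.le
      _ ≤ ηk * (ηk * (L * ⟪v0, v0⟫)) := by
          apply mul_le_mul_of_nonneg_left _ hηpos.le
          exact mul_le_mul_of_nonneg_left h4 hηpos.le
      _ = ηk ^ 2 * L * ⟪v0, v0⟫ := by ring
    exact le_of_mul_le_mul_right (by linarith) hv0pos
  have hγpos : 0 < γ := by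
    rw [hγ]; positivity
  have hγ1 : γ ≤ 1 := by
    rw [hγ, div_le_one (by positivity)]
    have hsq : μ * μ ≤ (L * ηk) * (L * ηk) := by nlinarith [hμη, hηpos, hL, hμ]
    nlinarith [hsq, mul_pos hL hηpos, hμ]
  have hγLη : γ * (L * ηk) = μ := by
    rw [hγ]; field_simp
  -- the points
  set g : EuclideanSpace ℝ (Fin n) := gradient f xk with hgdef
  set d : EuclideanSpace ℝ (Fin n) := xt - xk with hddef
  set e : EuclideanSpace ℝ (Fin n) := xstar - xk with hedef
  have hyX : xk + γ • d ∈ X := hconv.add_smul_sub_mem hxk hxtX ⟨hγpos.le, hγ1⟩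
  have hwX : xk + γ • e ∈ X := hconv.add_smul_sub_mem hxk hxstar ⟨hγpos.le, hγ1⟩
  -- (ii) smoothness at y
  have hii : f (xk + γ • d) ≤ f xk + γ * ⟪g, d⟫ + L / 2 * (γ ^ 2 * ⟪d, d⟫) := by
    have h := smooth_upper hconv hfd hHess hup hxk hyX
    rw [add_sub_cancel_left, real_inner_smul_right, real_inner_smul_left,
      real_inner_smul_right] at h
    calc f (xk + γ • d) ≤ f xk + γ * ⟪g, d⟫ + L / 2 * (γ * (γ * ⟪d, d⟫)) := h
    _ = f xk + γ * ⟪g, d⟫ + L / 2 * (γ ^ 2 * ⟪d, d⟫) := by ring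
  -- (iii)
  set q : ℝ := ⟪d, mApply Hk d⟫ with hqdef
  have hq0 : 0 ≤ q := hHq_nonneg d
  have hdd : μ * ⟪d, d⟫ ≤ ηk * q := le_trans (hlo xk hxk d) (hC2 d)
  have hiii : L * (γ ^ 2 * ⟪d, d⟫) ≤ γ * q := by
    have hmul := mul_le_mul_of_nonneg_left hdd (show (0:ℝ) ≤ L * γ ^ 2 / μ by positivity)
    have he1 : L * γ ^ 2 / μ * (μ * ⟪d, d⟫) = L * (γ ^ 2 * ⟪d, d⟫) := by
      field_simp
    have he2 : L * γ ^ 2 / μ * (ηk * q) = γ * q := by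
      rw [← hγLη]
      have hμ' : γ * (L * ηk) ≠ 0 := by rw [hγLη]; exact hμ.ne'
      field_simp
    rw [he1, he2] at hmul
    exact hmul
  -- (iv) model optimality
  set Qe : ℝ := ⟪e, mApply Hk e⟫ with hQedef
  have hiv : ⟪g, d⟫ + 1 / 2 * q ≤ γ * ⟪g, e⟫ + γ ^ 2 / 2 * Qe := by
    have h := hxtmin _ hwX
    rw [hfhat, hfhat, add_sub_cancel_left] at h
    have hsm : qForm Hk (γ • e) = γ ^ 2 * Qe := by
      rw [qForm, mApply_smul_vec, real_inner_smul_left, real_inner_smul_right]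
      ring
    rw [hsm, real_inner_smul_right] at h
    have hqq : qForm Hk (xt - xk) = q := rfl
    rw [hqq] at h
    linarith
  -- (v) strong convexity at xstar
  have hv : μ / 2 * ⟪e, e⟫ ≤ (f xstar - f xk) - ⟪g, e⟫ := by
    have h := smooth_lower hconv hfd hHess hlo hxk hxstar
    rw [← hedef] at h
    linarith
  have hQe_le : Qe ≤ ηk * L * ⟪e, e⟫ := by
    calc Qe ≤ ηk * ⟪e, mApply G e⟫ := hC1 e
    _ ≤ ηk * (L * ⟪e, e⟫) := mul_le_mul_of_nonneg_left (hup xk hxk e) hηpos.le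
    _ = ηk * L * ⟪e, e⟫ := by ring
  -- assemble
  have hΔ : 0 ≤ f xk - f xstar := by linarith [hminstar xk hxk]
  set Δ : ℝ := f xk - f xstar with hΔdef
  have hee : 0 ≤ ⟪e, e⟫ := real_inner_self_nonneg
  clear_value G v0 g d e q Qe Δ
  -- Qe ≤ (2 ηk L / μ) (−Δ − ⟪g,e⟫)
  have hQe2 : Qe ≤ 2 * ηk * L / μ * (-Δ - ⟪g, e⟫) := by
    have h := mul_le_mul_of_nonneg_left hv (show (0:ℝ) ≤ 2 * ηk * L / μ by positivity)
    have he1 : 2 * ηk * L / μ * (μ / 2 * ⟪e, e⟫) = ηk * L * ⟪e, e⟫ := by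
      field_simp
    rw [he1] at h
    have : (f xstar - f xk) - ⟪g, e⟫ = -Δ - ⟪g, e⟫ := by rw [hΔdef]; ring
    rw [this] at h
    linarith [hQe_le]
  -- combine: f(xk + γd) ≤ f xk − γ² Δ
  have hkey : f (xk + γ • d) ≤ f xk - γ ^ 2 * Δ := by
    have hmulγ := mul_le_mul_of_nonneg_left hiv hγpos.le
    have hQemul := mul_le_mul_of_nonneg_left hQe2 (show (0:ℝ) ≤ γ ^ 3 / 2 by positivity)
    have hsimp : γ ^ 3 / 2 * (2 * ηk * L / μ * (-Δ - ⟪g, e⟫)) = γ ^ 2 * (-Δ - ⟪g, e⟫) := by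
      rw [← hγLη]
      have hne : γ * (L * ηk) ≠ 0 := by rw [hγLη]; exact hμ.ne'
      field_simp
    rw [hsimp] at hQemul
    exact key_arith γ L _ _ _ _ _ _ _ _ hii hiii hmulγ hQemul
  -- conclude
  have hfxk1 : f xk1 ≤ f xk - γ ^ 2 * Δ := le_trans hxk1 hkey
  have hγ3 : μ ^ 3 / (L ^ 3 * ηk ^ 3) = γ ^ 3 := by
    rw [hγ, div_pow, mul_pow]
  rw [hγ3]
  have hγ32 : γ ^ 3 * Δ ≤ γ ^ 2 * Δ := by
    have h := mul_nonneg (mul_nonneg (sq_nonneg γ) (sub_nonneg.mpr hγ1)) hΔ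
    exact sub_nonneg.mp
      (by rw [show γ ^ 2 * Δ - γ ^ 3 * Δ = γ ^ 2 * (1 - γ) * Δ from by ring]; exact h)
  exact final_arith γ (f xk1) (f xk) (f xstar) Δ hΔdef hfxk1 hγ32
end

section
/- Let X ⊆ ℝⁿ be a nonempty compact convex set and f : ℝⁿ → ℝ twice continuously differentiable with μ·I ⪯ ∇²f(x) ⪯ L·I for all x ∈ X (0 < μ ≤ L), with unique minimizer x* over X. Fix x_k ∈ X with x_k ≠ x*, a symmetric positive definite H_k, and set η_k := max{λ_max(H_k⁻¹∇²f(x_k)), λ_max((∇²f(x_k))⁻¹H_k)}. Let f̂_k(x) := f(x_k) + ⟨∇f(x_k), x − x_k⟩ + ½‖x − x_k‖²_{H_k} with minimizer x̃*_{k+1} over X, let lb be a real number with 0 ≤ lb ≤ f(x_k) − f(x*), and let x̃ ∈ X satisfy f̂_k(x̃) − f̂_k(x̃*_{k+1}) ≤ ( lb/‖∇f(x_k)‖ )⁴. Then ‖x̃ − x̃*_{k+1}‖ ≤ √(2η_k/μ) · ‖x_k − x*‖². -/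
open Matrix
open scoped RealInnerProductSpace

lemma mApply_inner_move {n : ℕ} {S : Matrix (Fin n) (Fin n) ℝ} (hS : S.IsHermitian)
    (v y : EuclideanSpace ℝ (Fin n)) :
    ⟪mApply S v, y⟫ = ⟪v, mApply S y⟫ := by
  have h1 : star (Matrix.toEuclideanCLM (𝕜 := ℝ) S) = Matrix.toEuclideanCLM (𝕜 := ℝ) S := by
    rw [← map_star]
    congr 1
  have h2 := ContinuousLinearMap.adjoint_inner_left (Matrix.toEuclideanCLM (𝕜 := ℝ) S) y v
  rw [← ContinuousLinearMap.star_eq_adjoint, h1] at h2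
  exact h2

lemma inner_mApply_dot {n : ℕ} (M : Matrix (Fin n) (Fin n) ℝ) (v : EuclideanSpace ℝ (Fin n)) :
    ⟪v, mApply M v⟫ = dotProduct (star (fun i => v i)) (M *ᵥ (fun i => v i)) := by
  rw [PiLp.inner_apply]
  simp [dotProduct, mApply]
  exact Finset.sum_congr rfl fun i _ => mul_comm _ _

lemma rayleigh_upper {n : ℕ} {M : Matrix (Fin n) (Fin n) ℝ}
    (hM : M.IsHermitian) (w : EuclideanSpace ℝ (Fin n)) :
    ⟪w, mApply M w⟫ ≤ sSup (spectrum ℝ M) * ‖w‖ ^ 2 := by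
  set t := sSup (spectrum ℝ M) with ht
  have hspec : spectrum ℝ M = Set.range hM.eigenvalues := hM.spectrum_real_eq_range_eigenvalues
  have hle : ∀ i, hM.eigenvalues i ≤ t := by
    intro i
    apply le_csSup
    · rw [hspec]
      exact (Set.finite_range _).bddAbove
    · rw [hspec]; exact ⟨i, rfl⟩
  set b := hM.eigenvectorBasis with hb
  set c : EuclideanSpace ℝ (Fin n) := b.repr w with hc
  have hrepr : ∀ i, b.repr (mApply M w) i = hM.eigenvalues i * c i := by
    intro i
    rw [OrthonormalBasis.repr_apply_apply]
    have hsym : (Matrix.toEuclideanLin M).IsSymmetric := Matrix.isHermitian_iff_isSymmetric.1 hM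
    have : ⟪(b i : EuclideanSpace ℝ (Fin n)), mApply M w⟫
        = ⟪Matrix.toEuclideanLin M (b i), w⟫ := by
      rw [mApply, ← Matrix.coe_toEuclideanCLM_eq_toEuclideanLin]
      exact (hsym _ _).symm
    rw [this]
    have hev : Matrix.toEuclideanLin M (b i) = hM.eigenvalues i • (b i) := by
      apply (WithLp.equiv 2 _).injective
      change M *ᵥ (b i).ofLp = (hM.eigenvalues i • b i).ofLp
      ext j
      have := congrFun (hM.mulVec_eigenvectorBasis i) j
      simpa using this
    rw [hev, real_inner_smul_left, hc, OrthonormalBasis.repr_apply_apply]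
  have hinner : ⟪w, mApply M w⟫ = ∑ i, hM.eigenvalues i * c i ^ 2 := by
    have := b.repr.inner_map_map w (mApply M w)
    rw [← this, PiLp.inner_apply]
    simp only [RCLike.inner_apply, conj_trivial]
    apply Finset.sum_congr rfl
    intro i _
    rw [hrepr i]; ring
  have hnorm : ‖w‖ ^ 2 = ∑ i, c i ^ 2 := by
    rw [← real_inner_self_eq_norm_sq, ← b.repr.inner_map_map w w, PiLp.inner_apply]
    simp only [RCLike.inner_apply, conj_trivial, ← hc, sq]
  rw [hinner, hnorm, Finset.mul_sum]
  apply Finset.sum_le_sum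
  intro i _
  exact mul_le_mul_of_nonneg_right (hle i) (sq_nonneg _)

open scoped MatrixOrder in
/-- Generalized Rayleigh quotient bound: `vᵀAv ≤ λmax(P⁻¹A)·vᵀPv`. -/
lemma pencil_upper {n : ℕ} {P A : Matrix (Fin n) (Fin n) ℝ}
    (hP : P.PosDef) (hA : A.IsHermitian) (v : EuclideanSpace ℝ (Fin n)) :
    ⟪v, mApply A v⟫ ≤ sSup (spectrum ℝ (P⁻¹ * A)) * ⟪v, mApply P v⟫ := by
  obtain ⟨S, hSherm, hSP, hSdet⟩ :
      ∃ S : Matrix (Fin n) (Fin n) ℝ, S.IsHermitian ∧ S * S = P ∧ IsUnit S.det := by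
    refine ⟨CFC.sqrt P, (CFC.sqrt_nonneg P).posSemidef.isHermitian,
      CFC.sqrt_mul_sqrt_self P hP.posSemidef.nonneg, ?_⟩
    rw [isUnit_iff_ne_zero]
    intro h
    have : P.det = 0 := by rw [← CFC.sqrt_mul_sqrt_self P hP.posSemidef.nonneg, det_mul, h, mul_zero]
    exact ne_of_gt hP.det_pos this
  haveI := invertibleOfIsUnitDet S hSdet
  have hSinv_herm : (S⁻¹).IsHermitian := hSherm.inv
  set M : Matrix (Fin n) (Fin n) ℝ := S⁻¹ * A * S⁻¹ with hM
  have hMherm : M.IsHermitian := by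
    unfold Matrix.IsHermitian
    rw [conjTranspose_mul, conjTranspose_mul, hSinv_herm, hA]
    rw [hM, Matrix.mul_assoc]
  have hspec : spectrum ℝ (P⁻¹ * A) = spectrum ℝ M := by
    have hPinv : P⁻¹ = S⁻¹ * S⁻¹ := by rw [← hSP, Matrix.mul_inv_rev]
    let u : (Matrix (Fin n) (Fin n) ℝ)ˣ := (isUnit_iff_isUnit_det S |>.2 hSdet).unit
    have hu : (u : Matrix (Fin n) (Fin n) ℝ) = S := rfl
    have huinv : ((u⁻¹ : (Matrix (Fin n) (Fin n) ℝ)ˣ) : Matrix (Fin n) (Fin n) ℝ) = S⁻¹ := by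
      rw [Matrix.coe_units_inv, hu]
    have : M = u * (P⁻¹ * A) * (u⁻¹ : (Matrix (Fin n) (Fin n) ℝ)ˣ) := by
      rw [hu, huinv, hPinv, hM]
      rw [← Matrix.mul_assoc, ← Matrix.mul_assoc]
      rw [Matrix.mul_nonsing_inv S hSdet, Matrix.one_mul]
    rw [this, spectrum.units_conjugate]
  set w : EuclideanSpace ℝ (Fin n) := mApply S v with hw
  have hSS : S * (S⁻¹ * A) = A := by
    rw [← Matrix.mul_assoc, Matrix.mul_nonsing_inv S hSdet, Matrix.one_mul]
  have hMSw : mApply M w = mApply (S⁻¹ * A) v := by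
    rw [hw, ← mApply_mul, hM]
    rw [Matrix.mul_assoc (S⁻¹ * A), Matrix.nonsing_inv_mul S hSdet, Matrix.mul_one]
  have h1 : ⟪w, mApply M w⟫ = ⟪v, mApply A v⟫ := by
    rw [hMSw, hw, mApply_inner_move hSherm, ← mApply_mul, hSS]
  have h2 : (‖w‖ : ℝ) ^ 2 = ⟪v, mApply P v⟫ := by
    rw [← real_inner_self_eq_norm_sq, hw, mApply_inner_move hSherm, ← mApply_mul, hSP]
  calc ⟪v, mApply A v⟫ = ⟪w, mApply M w⟫ := h1.symm
    _ ≤ sSup (spectrum ℝ M) * ‖w‖ ^ 2 := rayleigh_upper hMherm w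
    _ = sSup (spectrum ℝ (P⁻¹ * A)) * ⟪v, mApply P v⟫ := by rw [hspec, h2]

lemma grad_lower {n : ℕ} {X : Set (EuclideanSpace ℝ (Fin n))} (hconv : Convex ℝ X)
    {f : EuclideanSpace ℝ (Fin n) → ℝ} (hf : ContDiff ℝ 2 f)
    {Hess : EuclideanSpace ℝ (Fin n) → Matrix (Fin n) (Fin n) ℝ}
    (hHess : ∀ x, HasFDerivAt (gradient f) (Matrix.toEuclideanCLM (𝕜 := ℝ) (Hess x)) x)
    (hpsd : ∀ x ∈ X, ∀ v : EuclideanSpace ℝ (Fin n), 0 ≤ ⟪v, mApply (Hess x) v⟫)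
    {a b : EuclideanSpace ℝ (Fin n)} (ha : a ∈ X) (hb : b ∈ X) :
    f a + ⟪gradient f a, b - a⟫ ≤ f b := by
  set d : EuclideanSpace ℝ (Fin n) := b - a with hd
  set γ : ℝ → EuclideanSpace ℝ (Fin n) := fun t => a + t • d with hγ
  have hγ0 : γ 0 = a := by simp [hγ]
  have hγ1 : γ 1 = b := by simp [hγ, hd]
  have hγX : ∀ t ∈ Set.Icc (0:ℝ) 1, γ t ∈ X := by
    intro t ht
    have h1 : (1 - t) • a + t • b = γ t := by
      simp [hγ, hd, smul_sub, sub_smul]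
      abel
    rw [← h1]
    exact hconv ha hb (by linarith [ht.1, ht.2]) ht.1 (by ring)
  have hline : ∀ t : ℝ, HasDerivAt γ d t := by
    intro t
    have h := ((hasDerivAt_id t).smul_const d).const_add a
    simp only [id_eq, one_smul] at h
    exact h
  have hdiff : ∀ x, HasFDerivAt f (InnerProductSpace.toDualMap ℝ _ (gradient f x)) x := by
    intro x
    exact hasGradientAt_iff_hasFDerivAt.1 (hf.differentiable (by norm_num) x).hasGradientAt
  set ψ : ℝ → ℝ := fun t => ⟪gradient f (γ t), d⟫ with hψdef
  have hφ : ∀ t : ℝ, HasDerivAt (fun s => f (γ s)) (ψ t) t := by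
    intro t
    exact (hdiff (γ t)).comp_hasDerivAt t (hline t)
  have hG : ∀ t : ℝ, HasDerivAt (fun s => gradient f (γ s)) (mApply (Hess (γ t)) d) t := by
    intro t
    exact (hHess (γ t)).comp_hasDerivAt t (hline t)
  have hψ : ∀ t : ℝ, HasDerivAt ψ ⟪mApply (Hess (γ t)) d, d⟫ t := by
    intro t
    have := (hG t).inner (𝕜 := ℝ) (hasDerivAt_const t d)
    simpa [hψdef] using this
  have hmono : MonotoneOn ψ (Set.Icc (0:ℝ) 1) := by
    apply monotoneOn_of_deriv_nonneg (convex_Icc 0 1)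
    · exact (continuous_iff_continuousAt.2 fun t => (hψ t).continuousAt).continuousOn
    · intro t _
      exact ((hψ t).differentiableAt).differentiableWithinAt
    · intro t ht
      rw [interior_Icc] at ht
      rw [(hψ t).deriv]
      have := hpsd (γ t) (hγX t ⟨le_of_lt ht.1, le_of_lt ht.2⟩) d
      rwa [real_inner_comm] at this
  obtain ⟨c, hc, hceq⟩ := exists_hasDerivAt_eq_slope (fun s => f (γ s)) ψ
    (by norm_num : (0:ℝ) < 1)
    ((continuous_iff_continuousAt.2 fun t => (hφ t).continuousAt).continuousOn)
    (fun t _ => hφ t)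
  have hψc : ψ c = f b - f a := by
    rw [hceq, hγ0, hγ1]; ring
  have h0c : ψ 0 ≤ ψ c :=
    hmono ⟨le_refl 0, by norm_num⟩ ⟨le_of_lt hc.1, le_of_lt hc.2⟩ (le_of_lt hc.1)
  have hψ0 : ψ 0 = ⟪gradient f a, b - a⟫ := by rw [hψdef]; simp [hγ0, hd]
  linarith [h0c, hψc ▸ h0c, hψ0 ▸ h0c]

lemma qForm_expand {n : ℕ} {H : Matrix (Fin n) (Fin n) ℝ} (hH : H.IsHermitian)
    (z w : EuclideanSpace ℝ (Fin n)) :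
    qForm H (z + w) = qForm H z + 2 * ⟪z, mApply H w⟫ + qForm H w := by
  have hadd : mApply H (z + w) = mApply H z + mApply H w := by simp [mApply]
  have hsym : ⟪w, mApply H z⟫ = ⟪z, mApply H w⟫ := by
    rw [← mApply_inner_move hH, real_inner_comm]
  simp only [qForm, hadd, inner_add_left, inner_add_right]
  rw [hsym]; ring

lemma qForm_smul {n : ℕ} (H : Matrix (Fin n) (Fin n) ℝ) (t : ℝ)
    (w : EuclideanSpace ℝ (Fin n)) :
    qForm H (t • w) = t ^ 2 * qForm H w := by
  have : mApply H (t • w) = t • mApply H w := by simp [mApply]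
  simp only [qForm, this, real_inner_smul_left, real_inner_smul_right]
  ring

/-- inexact scaled projections stay close to the exact one: if `x̃ ∈ X`
is an `ε_k`-optimal solution of the quadratic model with
`ε_k = (lb/‖∇f(x_k)‖)⁴` where `0 ≤ lb ≤ f(x_k) − f(x*)`, then
`‖x̃ − x̃*_{k+1}‖ ≤ √(2η_k/μ)·‖x_k − x*‖²`. -/
theorem socgs_inexact_projection_accuracy {n : ℕ}
    (X : Set (EuclideanSpace ℝ (Fin n)))
    (hne : X.Nonempty) (hcomp : IsCompact X) (hconv : Convex ℝ X)
    (f : EuclideanSpace ℝ (Fin n) → ℝ) (hf : ContDiff ℝ 2 f)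
    (Hess : EuclideanSpace ℝ (Fin n) → Matrix (Fin n) (Fin n) ℝ)
    (hHess : ∀ x, HasFDerivAt (gradient f) (Matrix.toEuclideanCLM (𝕜 := ℝ) (Hess x)) x)
    (μ L : ℝ) (hμ : 0 < μ) (hμL : μ ≤ L)
    (hbound : ∀ x ∈ X, (Hess x - μ • (1 : Matrix (Fin n) (Fin n) ℝ)).PosSemidef ∧
      (L • (1 : Matrix (Fin n) (Fin n) ℝ) - Hess x).PosSemidef)
    (xstar : EuclideanSpace ℝ (Fin n)) (hxstar : xstar ∈ X)
    (hminstar : ∀ y ∈ X, f xstar ≤ f y)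
    (huniq : ∀ z ∈ X, (∀ y ∈ X, f z ≤ f y) → z = xstar)
    (xk : EuclideanSpace ℝ (Fin n)) (hxk : xk ∈ X) (hkne : xk ≠ xstar)
    (Hk : Matrix (Fin n) (Fin n) ℝ) (hHk : Hk.PosDef)
    (ηk : ℝ) (hηk : ηk = max (lamMax (Hk⁻¹ * Hess xk)) (lamMax ((Hess xk)⁻¹ * Hk)))
    (fhat : EuclideanSpace ℝ (Fin n) → ℝ)
    (hfhat : ∀ x, fhat x =
      f xk + ⟪gradient f xk, x - xk⟫ + (1 / 2) * qForm Hk (x - xk))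
    (xt : EuclideanSpace ℝ (Fin n)) (hxtX : xt ∈ X)
    (hxtmin : ∀ w ∈ X, fhat xt ≤ fhat w)
    (lb : ℝ) (hlb0 : 0 ≤ lb) (hlb : lb ≤ f xk - f xstar)
    (xtil : EuclideanSpace ℝ (Fin n)) (hxtilX : xtil ∈ X)
    (hxtil : fhat xtil - fhat xt ≤ (lb / ‖gradient f xk‖) ^ 4) :
    ‖xtil - xt‖ ≤ Real.sqrt (2 * ηk / μ) * ‖xk - xstar‖ ^ 2 := by
  rcases Nat.eq_zero_or_pos n with hn0 | hn
  · exfalso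
    apply hkne
    subst hn0
    exact (WithLp.ext_iff _).2 (funext fun i => i.elim0)
  -- notation
  set g0 : EuclideanSpace ℝ (Fin n) := gradient f xk with hg0
  set A : Matrix (Fin n) (Fin n) ℝ := Hess xk with hA
  set d : EuclideanSpace ℝ (Fin n) := xtil - xt with hdd
  set R : ℝ := ‖xk - xstar‖ ^ 2 with hR
  have hRnn : 0 ≤ R := by positivity
  -- quadratic lower bound for the Hessians on X
  have hAq' : ∀ x ∈ X, ∀ v : EuclideanSpace ℝ (Fin n),
      μ * ⟪v, v⟫ ≤ ⟪v, mApply (Hess x) v⟫ := by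
    intro x hx v
    have h := (hbound x hx).1.dotProduct_mulVec_nonneg (fun i => v i)
    have hexp : dotProduct (star (fun i => v i))
        ((Hess x - μ • (1 : Matrix (Fin n) (Fin n) ℝ)) *ᵥ (fun i => v i))
        = ⟪v, mApply (Hess x) v⟫ - μ * ⟪v, v⟫ := by
      rw [Matrix.sub_mulVec, dotProduct_sub, inner_mApply_dot]
      congr 1
      rw [Matrix.smul_mulVec, Matrix.one_mulVec, dotProduct_smul]
      rw [PiLp.inner_apply]
      simp [dotProduct, sq]
    rw [hexp] at h
    linarith
  have hAherm : A.IsHermitian := by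
    have h := (hbound xk hxk).1.1
    have h2 : (A - μ • (1 : Matrix (Fin n) (Fin n) ℝ))ᴴ = A - μ • 1 := h
    rw [conjTranspose_sub, conjTranspose_smul, conjTranspose_one] at h2
    have : Aᴴ = A := by
      have := congrArg (· + μ • (1 : Matrix (Fin n) (Fin n) ℝ)) h2
      simpa [sub_add_cancel, star_trivial] using this
    exact this
  have hHkherm : Hk.IsHermitian := hHk.isHermitian
  -- qForm Hk is nonnegative / positive
  have hq_nonneg : ∀ v : EuclideanSpace ℝ (Fin n), 0 ≤ qForm Hk v := by
    intro v
    rw [qForm, inner_mApply_dot]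
    exact hHk.posSemidef.dotProduct_mulVec_nonneg _
  have hq_pos : ∀ v : EuclideanSpace ℝ (Fin n), v ≠ 0 → 0 < qForm Hk v := by
    intro v hv
    rw [qForm, inner_mApply_dot]
    apply hHk.dotProduct_mulVec_pos
    intro h
    apply hv
    refine (WithLp.ext_iff _).2 (funext fun i => ?_)
    exact congrFun h i
  -- pencil bound
  have hη : ∀ v : EuclideanSpace ℝ (Fin n), ⟪v, mApply A v⟫ ≤ ηk * qForm Hk v := by
    intro v
    have h1 := pencil_upper hHk hAherm v
    have h2 : sSup (spectrum ℝ (Hk⁻¹ * A)) ≤ ηk := by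
      rw [hηk]; exact le_max_left _ _
    calc ⟪v, mApply A v⟫ ≤ sSup (spectrum ℝ (Hk⁻¹ * A)) * ⟪v, mApply Hk v⟫ := h1
      _ ≤ ηk * qForm Hk v := mul_le_mul_of_nonneg_right h2 (hq_nonneg v)
  -- ηk is positive
  have hηpos : 0 < ηk := by
    set v0 : EuclideanSpace ℝ (Fin n) := EuclideanSpace.single ⟨0, hn⟩ (1:ℝ) with hv0
    have hv0ne : v0 ≠ 0 := by
      intro h
      have := congrArg (fun w : EuclideanSpace ℝ (Fin n) => ‖w‖) h
      simp [hv0] at this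
    have h1 : 0 < μ * ⟪v0, v0⟫ := by
      apply mul_pos hμ
      rw [real_inner_self_eq_norm_sq]
      exact pow_pos (norm_pos_iff.2 hv0ne) 2
    have h2 := le_trans (hAq' xk hxk v0) (hη v0)
    have h3 : 0 < qForm Hk v0 := hq_pos v0 hv0ne
    nlinarith
  -- Step 1 : ε ≤ R^2
  have hpsd : ∀ x ∈ X, ∀ v : EuclideanSpace ℝ (Fin n), 0 ≤ ⟪v, mApply (Hess x) v⟫ := by
    intro x hx v
    have h1 := hAq' x hx v
    have h2 : (0:ℝ) ≤ μ * ⟪v, v⟫ := mul_nonneg (le_of_lt hμ) real_inner_self_nonneg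
    linarith
  have hεR : (lb / ‖g0‖) ^ 4 ≤ R ^ 2 := by
    have hgl := grad_lower hconv hf hHess hpsd hxk hxstar
    have hsub : f xk - f xstar ≤ ⟪g0, xk - xstar⟫ := by
      have : ⟪g0, xstar - xk⟫ = -⟪g0, xk - xstar⟫ := by
        rw [← inner_neg_right]
        congr 1
        abel
      rw [this] at hgl
      linarith
    have hcs : ⟪g0, xk - xstar⟫ ≤ ‖g0‖ * ‖xk - xstar‖ := real_inner_le_norm _ _
    have hlbb : lb ≤ ‖g0‖ * ‖xk - xstar‖ := by linarith
    by_cases hg : ‖g0‖ = 0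
    · rw [hg, div_zero]
      have h04 : (0:ℝ) ^ 4 = 0 := by norm_num
      rw [h04]
      exact sq_nonneg R
    · have hgpos : 0 < ‖g0‖ := lt_of_le_of_ne (norm_nonneg _) (Ne.symm hg)
      have hdiv : lb / ‖g0‖ ≤ ‖xk - xstar‖ := by
        rw [div_le_iff₀ hgpos]
        linarith [hlbb]
      have h4 : (lb / ‖g0‖) ^ 4 ≤ ‖xk - xstar‖ ^ 4 :=
        pow_le_pow_left₀ (div_nonneg hlb0 (norm_nonneg _)) hdiv 4
      calc (lb / ‖g0‖) ^ 4 ≤ ‖xk - xstar‖ ^ 4 := h4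
        _ = R ^ 2 := by rw [hR]; ring
  -- Step 2 : qForm Hk d ≤ 2 ε
  set ε : ℝ := (lb / ‖g0‖) ^ 4 with hε
  set cval : ℝ := ⟪g0, d⟫ + ⟪xt - xk, mApply Hk d⟫ with hcval
  have hexpand : ∀ t : ℝ, fhat (xt + t • d) - fhat xt
      = t * cval + t ^ 2 * (qForm Hk d / 2) := by
    intro t
    rw [hfhat, hfhat]
    have hz : xt + t • d - xk = (xt - xk) + t • d := by abel
    rw [hz, qForm_expand hHkherm, qForm_smul]
    have hsm : mApply Hk (t • d) = t • mApply Hk d := by simp [mApply]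
    rw [hsm, real_inner_smul_right]
    have hg' : ⟪g0, (xt - xk) + t • d⟫ = ⟪g0, xt - xk⟫ + t * ⟪g0, d⟫ := by
      rw [inner_add_right, real_inner_smul_right]
    rw [hg', hcval]
    ring
  have hkey : ∀ t : ℝ, t ∈ Set.Icc (0:ℝ) 1 → 0 ≤ t * cval + t ^ 2 * (qForm Hk d / 2) := by
    intro t ht
    have hmem : xt + t • d ∈ X := by
      have h1 : (1 - t) • xt + t • xtil = xt + t • d := by
        rw [hdd]
        simp [smul_sub, sub_smul]
        abel
      rw [← h1]
      exact hconv hxtX hxtilX (by linarith [ht.1, ht.2]) ht.1 (by ring)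
    have := hxtmin _ hmem
    have h2 := hexpand t
    linarith
  have hcval_nonneg : 0 ≤ cval := by
    by_contra hc
    push_neg at hc
    rcases eq_or_ne d 0 with hd0 | hd0
    · rw [hcval, hd0] at hc
      simp [mApply] at hc
    · have hqd : 0 < qForm Hk d := hq_pos d hd0
      set t0 : ℝ := min 1 (-cval / qForm Hk d) with ht0
      have ht0pos : 0 < t0 := by
        apply lt_min one_pos
        apply div_pos (by linarith) hqd
      have ht0le1 : t0 ≤ 1 := min_le_left _ _
      have ht0le : t0 ≤ -cval / qForm Hk d := min_le_right _ _
      have hq : t0 * qForm Hk d ≤ -cval := by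
        have := (le_div_iff₀ hqd).1 ht0le
        linarith
      have hk := hkey t0 ⟨le_of_lt ht0pos, ht0le1⟩
      have h5 : t0 * (t0 * qForm Hk d) ≤ t0 * (-cval) :=
        mul_le_mul_of_nonneg_left hq (le_of_lt ht0pos)
      have h6 : t0 * cval < 0 := mul_neg_of_pos_of_neg ht0pos hc
      nlinarith [h5, h6, hk]
  have hfd : fhat xtil - fhat xt = cval + qForm Hk d / 2 := by
    have := hexpand 1
    have h1 : xt + (1:ℝ) • d = xtil := by rw [hdd]; simp
    rw [h1] at this
    linarith [this]
  have hq2ε : qForm Hk d ≤ 2 * ε := by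
    linarith [hfd, hcval_nonneg, hxtil]
  -- Step 3 : combine
  have hd2 : μ * ‖d‖ ^ 2 ≤ 2 * ηk * R ^ 2 := by
    have h1 : μ * ⟪d, d⟫ ≤ ⟪d, mApply A d⟫ := hAq' xk hxk d
    rw [real_inner_self_eq_norm_sq] at h1
    have h2 : ⟪d, mApply A d⟫ ≤ ηk * qForm Hk d := hη d
    have h3 : ηk * qForm Hk d ≤ ηk * (2 * R ^ 2) := by
      apply mul_le_mul_of_nonneg_left _ (le_of_lt hηpos)
      linarith [hq2ε, hεR]
    calc μ * ‖d‖ ^ 2 ≤ ηk * (2 * R ^ 2) := by linarith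
      _ = 2 * ηk * R ^ 2 := by ring
  have hdle : ‖d‖ ^ 2 ≤ (2 * ηk / μ) * R ^ 2 := by
    rw [div_mul_eq_mul_div, le_div_iff₀ hμ]
    calc ‖d‖ ^ 2 * μ = μ * ‖d‖ ^ 2 := by ring
      _ ≤ 2 * ηk * R ^ 2 := hd2
  calc ‖d‖ = Real.sqrt (‖d‖ ^ 2) := (Real.sqrt_sq (norm_nonneg d)).symm
    _ ≤ Real.sqrt ((2 * ηk / μ) * R ^ 2) := Real.sqrt_le_sqrt hdle
    _ = Real.sqrt (2 * ηk / μ) * R := by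
      rw [Real.sqrt_mul (by positivity) (R ^ 2), Real.sqrt_sq hRnn]
end

section
/- Let X ⊆ ℝⁿ be a nonempty compact convex set with ‖y − z‖ ≤ D for all y, z ∈ X, and let f : ℝⁿ → ℝ be differentiable and L-smooth on X, with x* a minimizer of f over X. For x ∈ X set h := f(x) − f(x*) and define the Frank-Wolfe gap g(x) := max_{v∈X} ⟨∇f(x), x − v⟩. Then: if h ≥ LD²/2 then g(x) ≤ LD²/2 + h, and if h ≤ LD²/2 then g(x) ≤ D·√(2Lh). -/
open Matrix
open scoped RealInnerProductSpace

/-- convergence of the Frank-Wolfe gap in terms of the primal gap: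
for `L`-smooth `f` over a set of diameter at most `D`, with primal gap
`h = f(x) − f(x*)` and Frank-Wolfe gap `g(x) = max_{v∈X}⟨∇f(x), x − v⟩`:
if `h ≥ LD²/2` then `g(x) ≤ LD²/2 + h`, and if `h ≤ LD²/2` then `g(x) ≤ D√(2Lh)`. -/
theorem socgs_frank_wolfe_gap_bound {n : ℕ}
    (X : Set (EuclideanSpace ℝ (Fin n)))
    (hne : X.Nonempty) (hcomp : IsCompact X) (hconv : Convex ℝ X)
    (D : ℝ) (hD : ∀ y ∈ X, ∀ z ∈ X, ‖y - z‖ ≤ D)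
    (f : EuclideanSpace ℝ (Fin n) → ℝ) (hf : Differentiable ℝ f)
    (L : ℝ) (hL : 0 < L)
    (hsmooth : ∀ x ∈ X, ∀ y ∈ X,
      f x - f y ≤ ⟪gradient f y, x - y⟫ + L / 2 * ‖x - y‖ ^ 2)
    (xstar : EuclideanSpace ℝ (Fin n)) (hxstar : xstar ∈ X)
    (hminstar : ∀ y ∈ X, f xstar ≤ f y)
    (x : EuclideanSpace ℝ (Fin n)) (hx : x ∈ X)
    (h g : ℝ) (hh : h = f x - f xstar)
    (hg : g = sSup ((fun v => ⟪gradient f x, x - v⟫) '' X)) :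
    (L * D ^ 2 / 2 ≤ h → g ≤ L * D ^ 2 / 2 + h) ∧
    (h ≤ L * D ^ 2 / 2 → g ≤ D * Real.sqrt (2 * L * h)) := by

  have hD0 : 0 ≤ D := le_trans (norm_nonneg _) (hD x hx x hx)
  have hh0 : 0 ≤ h := by
    rw [hh]; linarith [hminstar x hx]
  -- key inequality
  have key : ∀ v ∈ X, ∀ γ : ℝ, 0 < γ → γ ≤ 1 →
      γ * ⟪gradient f x, x - v⟫ ≤ h + L * γ ^ 2 * D ^ 2 / 2 := by
    intro v hv γ hγ0 hγ1
    set a : EuclideanSpace ℝ (Fin n) := x + γ • (v - x) with ha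
    have haX : a ∈ X := by
      have := hconv hx hv (by linarith : (0:ℝ) ≤ 1 - γ) (le_of_lt hγ0) (by ring)
      convert this using 1
      rw [ha]
      module
    have hax : a - x = γ • (v - x) := by rw [ha]; abel
    have hnorm : ‖a - x‖ ≤ γ * D := by
      rw [hax, norm_smul, Real.norm_eq_abs, abs_of_pos hγ0]
      exact mul_le_mul_of_nonneg_left (hD v hv x hx) (le_of_lt hγ0)
    have hinner : ⟪gradient f x, a - x⟫ = -(γ * ⟪gradient f x, x - v⟫) := by
      rw [hax, real_inner_smul_right]
      have : (x - v : EuclideanSpace ℝ (Fin n)) = -(v - x) := by abel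
      rw [this, inner_neg_right]; ring
    have hsm := hsmooth a haX x hx
    have hmin := hminstar a haX
    have hn2 : ‖a - x‖ ^ 2 ≤ γ ^ 2 * D ^ 2 := by
      have := sq_nonneg (γ * D)
      nlinarith [norm_nonneg (a - x)]
    rw [hinner] at hsm
    nlinarith [hsm, hmin]
  have gle : ∀ B : ℝ, (∀ v ∈ X, ⟪gradient f x, x - v⟫ ≤ B) → g ≤ B := by
    intro B hB
    rw [hg]
    apply csSup_le (hne.image _)
    rintro y ⟨v, hv, rfl⟩
    exact hB v hv
  constructor
  · intro hcase
    apply gle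
    intro v hv
    have := key v hv 1 one_pos le_rfl
    nlinarith
  · intro hcase
    apply gle
    intro v hv
    set t := ⟪gradient f x, x - v⟫ with ht
    have hs0 : (0:ℝ) ≤ 2 * L * h := by positivity
    have hsq : Real.sqrt (2 * L * h) ^ 2 = 2 * L * h := Real.sq_sqrt hs0
    rcases eq_or_lt_of_le hD0 with hDeq | hDpos
    · -- D = 0
      have hx0 : x - v = 0 := by
        have := hD x hx v hv
        have : ‖x - v‖ ≤ 0 := by rw [hDeq]; exact this
        simpa [norm_le_zero_iff] using this
      have : t = 0 := by rw [ht, hx0, inner_zero_right]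
      rw [this]
      positivity
    · rcases eq_or_lt_of_le hh0 with hheq | hhpos
      · -- h = 0
        have hRHS : D * Real.sqrt (2 * L * h) = 0 := by
          rw [← hheq]; simp
        rw [hRHS]
        apply le_of_forall_pos_le_add
        intro ε hε
        have hLD : 0 < L * D ^ 2 := by positivity
        set γ := min 1 (2 * ε / (L * D ^ 2)) with hγ
        have hγ0 : 0 < γ := lt_min one_pos (by positivity)
        have hγ1 : γ ≤ 1 := min_le_left _ _
        have hγε : γ ≤ 2 * ε / (L * D ^ 2) := min_le_right _ _
        have hk := key v hv γ hγ0 hγ1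
        rw [← hheq] at hk
        have h1 : t ≤ γ * (L * D ^ 2) / 2 := by
          nlinarith [hk, hγ0, mul_pos hγ0 hγ0]
        have h2 : γ * (L * D ^ 2) / 2 ≤ ε := by
          rw [le_div_iff₀ hLD] at hγε
          nlinarith
        linarith
      · -- h > 0, D > 0
        set s := Real.sqrt (2 * L * h) with hs
        have hspos : 0 < s := Real.sqrt_pos.mpr (by positivity)
        set γ := s / (L * D) with hγdef
        have hγ0 : 0 < γ := by positivity
        have hγ1 : γ ≤ 1 := by
          rw [div_le_one (by positivity)]
          have : s ^ 2 ≤ (L * D) ^ 2 := by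
            rw [hsq]; nlinarith
          nlinarith [mul_pos hL hDpos]
        have hk := key v hv γ hγ0 hγ1
        have hγs : γ * (L * D) = s := by
          rw [hγdef]; field_simp
        -- want: t ≤ D * s. We have γ t ≤ h + L γ² D² /2.
        -- h + L γ² D² / 2 = γ * D * s : check γ*(D*s) = γ²LD... compute
        clear_value s γ
        have hident : h + L * γ ^ 2 * D ^ 2 / 2 = γ * (D * s) := by
          have h2L : (2*L) ≠ 0 := by positivity
          apply mul_left_cancel₀ h2L
          linear_combination (-1) * hsq + (γ*L*D - s) * hγs
        rw [hident] at hk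
        exact le_of_mul_le_mul_left hk hγ0
end
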